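/- arXiv:1604.07133 — 7 statements merged into one kernel-verified Lean document; each statement's English description precedes it below -/
import Mathlib

section
/- Let G be a finite non-abelian AC-group (i.e., the centralizer of every non-central element is abelian). If x and y are non-central elements of G with distinct centralizers C_G(x) ≠ C_G(y), then C_G(x) ∩ C_G(y) = Z(G). -/
open Polynomial

/-- The commuting graph of a group: vertices are non-central elements,
adjacent iff distinct and commuting. -/
def commGraph (G : Type*) [Group G] : SimpleGraph {x : G // x ∉ Subgroup.center G} where
  Adj x y := x ≠ y ∧ (x : G) * y = y * x
  symm := ⟨by rintro x y ⟨h1, h2⟩; exact ⟨h1.symm, h2.symm⟩⟩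
  loopless := ⟨by rintro x ⟨h, _⟩; exact h rfl⟩

/-- The characteristic polynomial (over ℝ) of the adjacency matrix of the
commuting graph of a finite group. -/
noncomputable def commCharpoly (G : Type*) [Group G] [Finite G] : Polynomial ℝ := by
  classical
  have : Fintype G := Fintype.ofFinite G
  exact (SimpleGraph.adjMatrix ℝ (commGraph G)).charpoly

/-- The disjoint union of `k` copies of the complete graph on `m` vertices. -/
def completeUnion (k m : ℕ) : SimpleGraph (Fin k × Fin m) where
  Adj x y := x ≠ y ∧ x.1 = y.1
  symm := ⟨by rintro x y ⟨h1, h2⟩; exact ⟨h1.symm, h2.symm⟩⟩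
  loopless := ⟨by rintro x ⟨h, _⟩; exact h rfl⟩

/-- Let `G` be a finite non-abelian AC-group. If `x` and `y` are non-central elements
with distinct centralizers, then `C_G(x) ∩ C_G(y) = Z(G)`. -/
theorem centralizer_inf_centralizer_eq_center
    (G : Type*) [Group G] [Finite G]
    (hna : ¬ ∀ a b : G, a * b = b * a)
    (hAC : ∀ x : G, x ∉ Subgroup.center G →
      ∀ y ∈ Subgroup.centralizer ({x} : Set G), ∀ z ∈ Subgroup.centralizer ({x} : Set G),
        y * z = z * y)
    (x y : G) (hx : x ∉ Subgroup.center G) (hy : y ∉ Subgroup.center G)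
    (hne : Subgroup.centralizer ({x} : Set G) ≠ Subgroup.centralizer ({y} : Set G)) :
    Subgroup.centralizer ({x} : Set G) ⊓ Subgroup.centralizer ({y} : Set G)
      = Subgroup.center G := by
  apply le_antisymm
  · intro g hg
    obtain ⟨hgx', hgy'⟩ := hg
    have hgx : g * x = x * g := Subgroup.mem_centralizer_singleton_iff.mp hgx'
    have hgy : g * y = y * g := Subgroup.mem_centralizer_singleton_iff.mp hgy'
    by_contra hgc
    -- C(x) = C(g)
    have key : ∀ w : G, w ∉ Subgroup.center G → g ∈ Subgroup.centralizer ({w} : Set G) →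
        Subgroup.centralizer ({w} : Set G) = Subgroup.centralizer ({g} : Set G) := by
      intro w hw hgw
      apply le_antisymm
      · intro u hu
        rw [Subgroup.mem_centralizer_singleton_iff]
        exact hAC w hw u hu g hgw
      · intro u hu
        rw [Subgroup.mem_centralizer_singleton_iff]
        have hwg : (w : G) ∈ Subgroup.centralizer ({g} : Set G) := by
          rw [Subgroup.mem_centralizer_singleton_iff] at hgw ⊢
          exact hgw.symm
        exact hAC g hgc u hu w hwg
    have h1 := key x hx (Subgroup.mem_centralizer_singleton_iff.mpr hgx)
    have h2 := key y hy (Subgroup.mem_centralizer_singleton_iff.mpr hgy)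
    exact hne (h1.trans h2.symm)
  · intro g hg
    have h := Subgroup.mem_center_iff.mp hg
    exact ⟨Subgroup.mem_centralizer_singleton_iff.mpr (h x).symm,
      Subgroup.mem_centralizer_singleton_iff.mpr (h y).symm⟩
end

section
/- Let G be a finite non-abelian AC-group with distinct centralizers X_1, ..., X_n of non-central elements. Then the commuting graph Γ_G is the disjoint union of complete graphs K_{|X_1|-|Z(G)|}, ..., K_{|X_n|-|Z(G)|}; equivalently, two non-central elements x, y are connected in Γ_G if and only if they lie in the same centralizer X_i. -/
open Polynomial

/-- In a finite non-abelian AC-group, two distinct non-central elements are adjacent in the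
commuting graph iff they lie in a common centralizer of a non-central element; i.e. the
commuting graph is the disjoint union of the complete graphs on the sets `X_i \ Z(G)`. -/
theorem commGraph_adj_iff_mem_same_centralizer
    (G : Type*) [Group G] [Finite G]
    (hna : ¬ ∀ a b : G, a * b = b * a)
    (hAC : ∀ x : G, x ∉ Subgroup.center G →
      ∀ y ∈ Subgroup.centralizer ({x} : Set G), ∀ z ∈ Subgroup.centralizer ({x} : Set G),
        y * z = z * y) :
    ∀ (x y : G) (hx : x ∉ Subgroup.center G) (hy : y ∉ Subgroup.center G),
      (commGraph G).Adj ⟨x, hx⟩ ⟨y, hy⟩ ↔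
        x ≠ y ∧ ∃ z : G, z ∉ Subgroup.center G ∧
          x ∈ Subgroup.centralizer ({z} : Set G) ∧ y ∈ Subgroup.centralizer ({z} : Set G) := by
  intro x y hx hy
  constructor
  · rintro ⟨hne, hc⟩
    refine ⟨fun h => hne (Subtype.ext h), x, hx, ?_, ?_⟩
    · exact Subgroup.mem_centralizer_singleton_iff.mpr rfl
    · exact Subgroup.mem_centralizer_singleton_iff.mpr hc.symm
  · rintro ⟨hne, z, hz, hxz, hyz⟩
    exact ⟨fun h => hne (congrArg Subtype.val h), hAC z hz x hxz y hyz⟩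
end

section
/- The commuting graph of any finite non-abelian AC-group is integral, i.e., all eigenvalues of its adjacency matrix are integers. -/
open Polynomial

/-- A root of the characteristic polynomial of a real matrix is an eigenvalue. -/
lemma charpoly_root_eigvec {n : Type*} [Fintype n] [DecidableEq n]
    (A : Matrix n n ℝ) {r : ℝ} (hr : A.charpoly.IsRoot r) :
    ∃ v : n → ℝ, v ≠ 0 ∧ A.mulVec v = r • v := by
  have h0 : ((Matrix.scalar n) r - A).det = 0 := by
    have h := hr
    rw [Polynomial.IsRoot, Matrix.charpoly, _root_.eval_det,
      Matrix.matPolyEquiv_charmatrix, eval_sub, eval_X, eval_C] at h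
    exact h
  obtain ⟨v, hv0, hv⟩ := (Matrix.exists_mulVec_eq_zero_iff).mpr h0
  refine ⟨v, hv0, ?_⟩
  have := hv
  rw [Matrix.sub_mulVec] at this
  have hs : ((Matrix.scalar n) r).mulVec v = r • v := by
    ext i
    simp [Matrix.scalar, Matrix.mulVec_diagonal]
  rw [hs] at this
  exact (sub_eq_zero.mp this).symm

/-- Eigenvalues of the "equivalence relation minus identity" matrix are integers. -/
lemma union_cliques_integral {n : Type*} [Fintype n] [DecidableEq n]
    (R : n → n → Prop)
    (hrefl : ∀ x, R x x) (hsymm : ∀ x y, R x y → R y x)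
    (htrans : ∀ x y z, R x y → R y z → R x z)
    (A : Matrix n n ℝ)
    (hA1 : ∀ x y, x ≠ y → R x y → A x y = 1)
    (hA0 : ∀ x y, ¬(x ≠ y ∧ R x y) → A x y = 0)
    (r : ℝ) (hr : A.charpoly.IsRoot r) : ∃ k : ℤ, r = (k : ℝ) := by
  classical
  obtain ⟨v, hv0, hv⟩ := charpoly_root_eigvec A hr
  set S : n → ℝ := fun x => ∑ y ∈ Finset.univ.filter (fun y => R x y), v y with hS
  have key : ∀ x, (r + 1) * v x = S x := by
    intro x
    have hmul : (A.mulVec v) x = r * v x := by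
      rw [hv]; simp
    have hcalc : (A.mulVec v) x = S x - v x := by
      rw [Matrix.mulVec, dotProduct]
      have : ∀ y, A x y * v y = (if y ∈ Finset.univ.filter (fun y => R x y) then v y else 0)
          - (if y = x then v y else 0) := by
        intro y
        by_cases hxy : y = x
        · subst hxy
          simp [hA0 y y (by simp), hrefl y]
        · by_cases hR : R x y
          · simp [hA1 x y (Ne.symm hxy) hR, hR, hxy]
          · simp [hA0 x y (by tauto), hR, hxy]
      rw [Finset.sum_congr rfl (fun y _ => this y), Finset.sum_sub_distrib,
        Finset.sum_ite_mem, Finset.univ_inter, Finset.sum_ite_eq' Finset.univ x v]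
      simp [hS]
    have := hcalc.symm.trans hmul
    linarith [this]
  by_cases hr1 : r = -1
  · exact ⟨-1, by simp [hr1]⟩
  · have hr1' : r + 1 ≠ 0 := fun h => hr1 (by linarith)
    obtain ⟨x0, hx0⟩ := Function.ne_iff.mp hv0
    have hveq : ∀ y, R x0 y → v y = v x0 := by
      intro y hy
      have hSy : S y = S x0 := by
        apply Finset.sum_congr _ (fun _ _ => rfl)
        ext z
        simp only [Finset.mem_filter, Finset.mem_univ, true_and]
        exact ⟨fun h => htrans x0 y z hy h, fun h => htrans y x0 z (hsymm _ _ hy) h⟩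
      have := (key y).trans (hSy.trans (key x0).symm)
      exact mul_left_cancel₀ hr1' this
    have hScard : S x0 = ((Finset.univ.filter (fun y => R x0 y)).card : ℝ) * v x0 := by
      rw [hS]
      simp only
      rw [Finset.sum_congr rfl (fun y hy => hveq y (Finset.mem_filter.mp hy).2)]
      rw [Finset.sum_const, nsmul_eq_mul]
    have := (key x0).trans hScard
    have : r + 1 = ((Finset.univ.filter (fun y => R x0 y)).card : ℝ) :=
      mul_right_cancel₀ hx0 this
    exact ⟨(Finset.univ.filter (fun y => R x0 y)).card - 1, by push_cast; linarith⟩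

/-- The commuting graph of a finite non-abelian AC-group is integral:
every eigenvalue of its adjacency matrix is an integer. -/
theorem commGraph_integral_of_AC
    (G : Type*) [Group G] [Finite G]
    (hna : ¬ ∀ a b : G, a * b = b * a)
    (hAC : ∀ x : G, x ∉ Subgroup.center G →
      ∀ y ∈ Subgroup.centralizer ({x} : Set G), ∀ z ∈ Subgroup.centralizer ({x} : Set G),
        y * z = z * y) :
    ∀ r : ℝ, (commCharpoly G).IsRoot r → ∃ k : ℤ, r = (k : ℝ) := by
  classical
  letI : Fintype G := Fintype.ofFinite G
  intro r hr
  unfold commCharpoly at hr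
  refine union_cliques_integral (fun x y : {x : G // x ∉ Subgroup.center G} =>
      (x : G) * y = y * x) (fun x => rfl) (fun x y h => h.symm) ?htrans _ ?hA1 ?hA0 r hr
  case htrans =>
    rintro ⟨x, hx⟩ ⟨y, hy⟩ ⟨z, hz⟩ hxy hyz
    have hxm : x ∈ Subgroup.centralizer ({(y : G)} : Set G) := by
      rw [Subgroup.mem_centralizer_iff]
      rintro g hg
      simp only [Set.mem_singleton_iff] at hg
      subst hg
      exact hxy.symm
    have hzm : z ∈ Subgroup.centralizer ({(y : G)} : Set G) := by
      rw [Subgroup.mem_centralizer_iff]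
      rintro g hg
      simp only [Set.mem_singleton_iff] at hg
      subst hg
      exact hyz
    exact hAC y hy x hxm z hzm
  case hA1 =>
    intro x y hxy hR
    rw [SimpleGraph.adjMatrix_apply, if_pos ⟨hxy, hR⟩]
  case hA0 =>
    intro x y h
    simp only [SimpleGraph.adjMatrix_apply]
    rw [if_neg]
    exact h
end

section
/- For the quasidihedral group QD_{2^n} = ⟨a, b : a^{2^{n-1}} = b^2 = 1, bab^{-1} = a^{2^{n-2}-1}⟩ with n ≥ 4, the commuting graph Γ_{QD_{2^n}} is isomorphic to the disjoint union K_{2^{n-1}-2} ⊔ 2^{n-2}·K_2. -/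
open Polynomial

lemma qd_key (n : ℕ) (hn : 4 ≤ n) (x : ℤ) :
    ((2:ℤ)^(n-1)) ∣ ((2:ℤ)^(n-2) - 2) * x ↔ ((2:ℤ)^(n-2)) ∣ x := by
  have h2 : (2:ℤ)^(n-2) = 2 * 2^(n-3) := by rw [← pow_succ']; congr 1; omega
  have h1 : (2:ℤ)^(n-1) = 2 * 2^(n-2) := by rw [← pow_succ']; congr 1; omega
  have h3 : (2:ℤ)^(n-3) = 2 * 2^(n-4) := by rw [← pow_succ']; congr 1; omega
  have hodd : ¬ (2:ℤ) ∣ ((2:ℤ)^(n-3) - 1) := by rw [h3]; omega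
  have hcop : IsCoprime ((2:ℤ)^(n-2)) ((2:ℤ)^(n-3) - 1) :=
    IsCoprime.pow_left ((Int.prime_two.coprime_iff_not_dvd).mpr hodd)
  constructor
  · intro h
    have he : ((2:ℤ)^(n-2) - 2) * x = 2 * (((2:ℤ)^(n-3) - 1) * x) := by rw [h2]; ring
    rw [he, h1] at h
    have h' := (mul_dvd_mul_iff_left (two_ne_zero (α := ℤ))).mp h
    exact hcop.dvd_of_dvd_mul_left h'
  · rintro ⟨c, rfl⟩
    exact ⟨((2:ℤ)^(n-3) - 1) * c, by rw [h1, h2]; ring⟩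

/-- For `n ≥ 4`, the commuting graph of the quasidihedral group
`QD_{2^n} = ⟨a, b : a^{2^{n-1}} = b^2 = 1, b a b⁻¹ = a^{2^{n-2}-1}⟩`
is isomorphic to `K_{2^{n-1}-2} ⊔ 2^{n-2}·K_2`. -/
theorem commGraph_quasidihedral
    (n : ℕ) (hn : 4 ≤ n) (G : Type*) [Group G] [Finite G]
    (a b : G) (ha : orderOf a = 2 ^ (n - 1)) (hb : orderOf b = 2)
    (hrel : b * a * b⁻¹ = a ^ (2 ^ (n - 2) - 1))
    (hcard : Nat.card G = 2 ^ n)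
    (hgen : Subgroup.closure ({a, b} : Set G) = ⊤) :
    Nonempty (commGraph G ≃g
      ((⊤ : SimpleGraph (Fin (2 ^ (n - 1) - 2))) ⊕g completeUnion (2 ^ (n - 2)) 2)) := by
  classical
  set r : ℕ := 2 ^ (n - 2) with hrdef
  set m : ℕ := 2 ^ (n - 1) with hmdef
  have hr4 : 4 ≤ r := by
    have h : (2:ℕ)^2 ≤ 2^(n-2) := Nat.pow_le_pow_right (by norm_num) (by omega)
    simpa [hrdef] using h
  have hm2r : m = 2 * r := by rw [hmdef, hrdef, ← pow_succ']; congr 1; omega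
  have hm0 : 0 < m := by omega
  have key : ∀ x : ℤ, (m:ℤ) ∣ ((r:ℤ) - 2) * x ↔ (r:ℤ) ∣ x := by
    intro x
    have h := qd_key n hn x
    rw [hmdef, hrdef]
    push_cast
    exact h
  have hbb : b * b = 1 := by
    have h := pow_orderOf_eq_one b; rwa [hb, pow_two] at h
  have hbinv : b⁻¹ = b := inv_eq_of_mul_eq_one_left hbb
  have haord : ∀ i j : ℤ, a ^ i = a ^ j ↔ i ≡ j [ZMOD (m:ℕ)] := by
    intro i j; rw [zpow_eq_zpow_iff_modEq, ha]
  have hba : ∀ i : ℤ, b * a ^ i = a ^ (((r:ℤ) - 1) * i) * b := by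
    intro i
    have h1 : b * a ^ i * b⁻¹ = (b * a * b⁻¹) ^ i := conj_zpow.symm
    rw [hrel] at h1
    have h2 : ((a ^ (r - 1 : ℕ)) : G) ^ i = a ^ (((r:ℤ) - 1) * i) := by
      rw [← zpow_natCast a (r-1), ← zpow_mul]
      congr 1
      have hc : ((r - 1 : ℕ) : ℤ) = (r:ℤ) - 1 := by omega
      rw [hc]
    rw [h2, hbinv] at h1
    calc b * a ^ i = (b * a ^ i * b) * b := by rw [mul_assoc, hbb, mul_one]
    _ = a ^ (((r:ℤ) - 1) * i) * b := by rw [h1]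
  have hmem : ∀ g : G, ∃ i : ℤ, g = a ^ i ∨ g = a ^ i * b := by
    intro g
    have hg : g ∈ Subgroup.closure ({a, b} : Set G) := by rw [hgen]; trivial
    induction hg using Subgroup.closure_induction with
    | mem x hx =>
      rcases hx with rfl | rfl
      · exact ⟨1, Or.inl (zpow_one _).symm⟩
      · exact ⟨0, Or.inr (by rw [zpow_zero, one_mul])⟩
    | one => exact ⟨0, Or.inl (zpow_zero a).symm⟩
    | mul x y hx hy ihx ihy =>
      obtain ⟨i, rfl | rfl⟩ := ihx
      · obtain ⟨j, rfl | rfl⟩ := ihy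
        · exact ⟨i + j, Or.inl (by rw [zpow_add])⟩
        · exact ⟨i + j, Or.inr (by rw [← mul_assoc, ← zpow_add])⟩
      · obtain ⟨j, rfl | rfl⟩ := ihy
        · exact ⟨i + ((r:ℤ)-1)*j, Or.inr (by
            rw [mul_assoc, hba j, ← mul_assoc, ← zpow_add])⟩
        · exact ⟨i + ((r:ℤ)-1)*j, Or.inl (by
            rw [mul_assoc, ← mul_assoc b, hba j, mul_assoc, hbb, mul_one,
              ← zpow_add])⟩
    | inv x hx ihx =>
      obtain ⟨i, rfl | rfl⟩ := ihx
      · exact ⟨-i, Or.inl (zpow_neg a i).symm⟩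
      · exact ⟨((r:ℤ)-1) * (-i), Or.inr (by rw [mul_inv_rev, hbinv, ← zpow_neg, hba])⟩
  have hbz : ∀ i : ℤ, b ≠ a ^ i := by
    intro i hbi
    have htop : Subgroup.zpowers a = ⊤ := by
      rw [Subgroup.eq_top_iff']
      intro g
      obtain ⟨j, rfl | rfl⟩ := hmem g
      · exact zpow_mem (Subgroup.mem_zpowers a) j
      · rw [hbi, ← zpow_add]; exact zpow_mem (Subgroup.mem_zpowers a) _
    have hcard' : orderOf a = Nat.card G := by
      rw [← Nat.card_zpowers, htop, Subgroup.card_top]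
    rw [ha, hcard] at hcard'
    have hlt : (2:ℕ)^(n-1) < 2^n := Nat.pow_lt_pow_right (by norm_num) (by omega)
    omega
  have habne : ∀ i j : ℤ, a ^ i ≠ a ^ j * b := by
    intro i j h
    have hb2 : b = a ^ (-j + i) := by
      rw [zpow_add]
      rw [h, ← mul_assoc, ← zpow_add, neg_add_cancel, zpow_zero, one_mul]
    exact hbz _ hb2
  have hcent_of : ∀ x : G, a * x = x * a → b * x = x * b → x ∈ Subgroup.center G := by
    intro x hax hbx
    rw [Subgroup.mem_center_iff]
    intro g
    have hg : g ∈ Subgroup.centralizer {x} := by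
      have hle : Subgroup.closure ({a, b} : Set G) ≤ Subgroup.centralizer {x} := by
        rw [Subgroup.closure_le]
        rintro y (rfl | rfl) <;>
        · rw [SetLike.mem_coe, Subgroup.mem_centralizer_iff]
          intro z hz
          rw [Set.mem_singleton_iff] at hz
          subst hz
          first | exact hax.symm | exact hbx.symm
      exact hle (by rw [hgen]; trivial)
    exact (Subgroup.mem_centralizer_iff.mp hg x rfl).symm
  have hcenA : ∀ i : ℤ, (a ^ i ∈ Subgroup.center G ↔ (r:ℤ) ∣ i) := by
    intro i
    constructor
    · intro hcen
      have h := Subgroup.mem_center_iff.mp hcen b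
      rw [hba i] at h
      have h2 : a ^ (((r:ℤ)-1) * i) = a ^ i := mul_right_cancel h
      rw [haord] at h2
      have h3 : (m:ℤ) ∣ ((r:ℤ) - 2) * i := by
        have hd := Int.ModEq.dvd h2
        have heq : i - ((r:ℤ)-1) * i = -(((r:ℤ)-2) * i) := by ring
        rw [heq] at hd
        exact dvd_neg.mp hd
      exact (key i).mp h3
    · intro hdvd
      apply hcent_of
      · exact ((Commute.refl a).zpow_right i).eq
      · rw [hba i]
        have h2 : a ^ (((r:ℤ)-1) * i) = a ^ i := by
          rw [haord, Int.modEq_iff_dvd]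
          have heq : i - ((r:ℤ)-1)*i = -(((r:ℤ)-2)*i) := by ring
          rw [heq]
          exact dvd_neg.mpr ((key i).mpr hdvd)
        rw [h2]
  have hcenB : ∀ i : ℤ, a ^ i * b ∉ Subgroup.center G := by
    intro i hc
    have h := Subgroup.mem_center_iff.mp hc a
    have hL : a * (a ^ i * b) = a ^ (1 + i) * b := by
      rw [← mul_assoc, ← zpow_one_add]
    have hR : (a ^ i * b) * a = a ^ (i + ((r:ℤ)-1)) * b := by
      have hba1 : b * a = a ^ ((r:ℤ)-1) * b := by
        have h1 := hba 1
        rwa [zpow_one, mul_one] at h1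
      rw [mul_assoc, hba1, ← mul_assoc, ← zpow_add]
    rw [hL, hR] at h
    have h2 := mul_right_cancel h
    rw [haord, Int.modEq_iff_dvd] at h2
    have heq : (i + ((r:ℤ)-1)) - (1+i) = (r:ℤ) - 2 := by ring
    rw [heq] at h2
    have hle := Int.le_of_dvd (by omega) h2
    omega
  -- commuting relations
  have hcAA : ∀ i j : ℤ, a ^ i * a ^ j = a ^ j * a ^ i := by
    intro i j; rw [← zpow_add, ← zpow_add, add_comm]
  have hcAB : ∀ i j : ℤ, (a ^ i * (a ^ j * b) = (a ^ j * b) * a ^ i ↔ (r:ℤ) ∣ i) := by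
    intro i j
    have hL : a ^ i * (a ^ j * b) = a ^ (i + j) * b := by rw [← mul_assoc, ← zpow_add]
    have hR : (a ^ j * b) * a ^ i = a ^ (j + ((r:ℤ)-1) * i) * b := by
      rw [mul_assoc, hba i, ← mul_assoc, ← zpow_add]
    rw [hL, hR, mul_left_inj, haord, Int.modEq_iff_dvd]
    have heq : (j + ((r:ℤ)-1)*i) - (i+j) = ((r:ℤ)-2) * i := by ring
    rw [heq]
    exact key i
  have hcBB : ∀ i j : ℤ,
      ((a ^ i * b) * (a ^ j * b) = (a ^ j * b) * (a ^ i * b) ↔ (r:ℤ) ∣ (i - j)) := by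
    intro i j
    have hP : ∀ k l : ℤ, (a ^ k * b) * (a ^ l * b) = a ^ (k + ((r:ℤ)-1) * l) := by
      intro k l
      rw [mul_assoc, ← mul_assoc b, hba l, mul_assoc, hbb, mul_one,
        ← zpow_add]
    rw [hP, hP, haord, Int.modEq_iff_dvd]
    have heq : (j + ((r:ℤ)-1)*i) - (i + ((r:ℤ)-1)*j) = ((r:ℤ)-2) * (i - j) := by ring
    rw [heq]
    exact key _
  -- vertex normalization
  have hnat : ∀ k l : ℕ, k < m → l < m → a ^ (k:ℤ) = a ^ (l:ℤ) → k = l := by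
    intro k l hk hl h
    rw [zpow_natCast, zpow_natCast, pow_eq_pow_iff_modEq, ha] at h
    rwa [Nat.ModEq, Nat.mod_eq_of_lt hk, Nat.mod_eq_of_lt hl] at h
  let e : Fin (m - 2) → ℕ := fun i => if i.val < r - 1 then i.val + 1 else i.val + 2
  have he_bound : ∀ i : Fin (m - 2), (1 ≤ e i ∧ e i < m) ∧ e i ≠ r := by
    intro i
    have hi := i.isLt
    simp only [e]
    split <;> omega
  have hnotdvd : ∀ i : Fin (m - 2), ¬ (r:ℤ) ∣ ((e i : ℕ) : ℤ) := by
    intro i hdvd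
    rw [Int.natCast_dvd_natCast] at hdvd
    obtain ⟨c, hc⟩ := hdvd
    obtain ⟨⟨h1, h2⟩, h3⟩ := he_bound i
    have hc2 : c ≤ 2 := by
      by_contra hcc
      push_neg at hcc
      have h5 : r * 3 ≤ r * c := Nat.mul_le_mul_left r hcc
      omega
    interval_cases c <;> omega
  have hfA : ∀ i : Fin (m - 2), a ^ ((e i : ℕ) : ℤ) ∉ Subgroup.center G :=
    fun i hc => hnotdvd i ((hcenA _).mp hc)
  have hbound : ∀ (j : Fin r) (t : Fin 2), (j.val + t.val * r : ℕ) < m := by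
    rintro ⟨j, hj⟩ ⟨t, ht⟩
    show j + t * r < m
    interval_cases t <;> omega
  let f : (Fin (m - 2) ⊕ Fin r × Fin 2) → {x : G // x ∉ Subgroup.center G} :=
    Sum.elim (fun i => ⟨a ^ ((e i : ℕ) : ℤ), hfA i⟩)
      (fun p => ⟨a ^ ((p.1.val + p.2.val * r : ℕ) : ℤ) * b, hcenB _⟩)
  have hinj : Function.Injective f := by
    rintro (i | ⟨j, t⟩) (i' | ⟨j', t'⟩) h <;>
      simp only [f, Sum.elim_inl, Sum.elim_inr, Subtype.mk.injEq] at h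
    · have hee := hnat _ _ (he_bound i).1.2 (he_bound i').1.2 h
      have hii : i = i' := by
        have h1 := i.isLt
        have h2 := i'.isLt
        apply Fin.ext
        simp only [e] at hee
        split_ifs at hee <;> omega
      rw [hii]
    · exact absurd h (habne _ _)
    · exact absurd h.symm (habne _ _)
    · have h' : a ^ ((j.val + t.val * r : ℕ) : ℤ) = a ^ ((j'.val + t'.val * r : ℕ) : ℤ) :=
        mul_right_cancel h
      have hjt := hnat _ _ (hbound j t) (hbound j' t') h'
      obtain ⟨j, hj⟩ := j
      obtain ⟨t, ht⟩ := t
      obtain ⟨j', hj'⟩ := j'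
      obtain ⟨t', ht'⟩ := t'
      have hjt' : j + t * r = j' + t' * r := hjt
      simp only [Sum.inr.injEq, Prod.mk.injEq, Fin.mk.injEq]
      interval_cases t <;> interval_cases t' <;> omega
  have hsurj : Function.Surjective f := by
    have hred : ∀ i : ℤ, ∃ k : ℕ, k < m ∧ a ^ i = a ^ (k:ℤ) := by
      intro i
      have h1 : 0 ≤ i % (m:ℤ) := Int.emod_nonneg i (by exact_mod_cast hm0.ne')
      have h2 : i % (m:ℤ) < m := Int.emod_lt_of_pos i (by exact_mod_cast hm0)
      refine ⟨(i % (m:ℤ)).toNat, by omega, ?_⟩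
      rw [haord]
      rw [Int.toNat_of_nonneg h1]
      show i % (m:ℤ) = (i % (m:ℤ)) % (m:ℤ)
      exact (Int.emod_emod_of_dvd i dvd_rfl).symm
    rintro ⟨x, hx⟩
    obtain ⟨i, rfl | rfl⟩ := hmem x
    · obtain ⟨k, hk, hik⟩ := hred i
      have hnd : ¬ r ∣ k := by
        intro hd
        apply hx
        rw [hik]
        exact (hcenA _).mpr (Int.natCast_dvd_natCast.mpr hd)
      have hk0 : k ≠ 0 := by rintro rfl; exact hnd (dvd_zero r)
      have hkr : k ≠ r := by rintro rfl; exact hnd dvd_rfl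
      refine ⟨Sum.inl ⟨if k < r then k - 1 else k - 2, by split <;> omega⟩, ?_⟩
      apply Subtype.ext
      simp only [f, Sum.elim_inl]
      have hek : e ⟨if k < r then k - 1 else k - 2, by split <;> omega⟩ = k := by
        simp only [e]
        split_ifs <;> omega
      rw [hek]
      exact hik.symm
    · obtain ⟨k, hk, hik⟩ := hred i
      have hkd : k / r < 2 := by
        rw [Nat.div_lt_iff_lt_mul (by omega : 0 < r)]
        omega
      refine ⟨Sum.inr (⟨k % r, Nat.mod_lt _ (by omega)⟩, ⟨k / r, hkd⟩), ?_⟩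
      apply Subtype.ext
      simp only [f, Sum.elim_inr]
      have hke : (k % r + (k / r) * r : ℕ) = k := by
        rw [mul_comm]
        exact Nat.mod_add_div k r
      rw [hke, hik]
  have hdvd_iff : ∀ (j j' : Fin r) (t t' : Fin 2),
      ((r:ℤ) ∣ ((j.val + t.val * r : ℕ):ℤ) - ((j'.val + t'.val * r : ℕ):ℤ)) ↔ j = j' := by
    intro j j' t t'
    have hrw : ((j.val + t.val * r : ℕ):ℤ) - ((j'.val + t'.val * r : ℕ):ℤ)
        = ((j.val:ℤ) - j'.val) + ((t.val:ℤ) - t'.val) * (r:ℤ) := by push_cast; ring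
    rw [hrw]
    constructor
    · intro h
      have hd : (r:ℤ) ∣ ((t.val:ℤ) - t'.val) * (r:ℤ) := dvd_mul_left _ _
      have h2 := h.sub hd
      rw [add_sub_cancel_right] at h2
      have h4 : r ∣ ((j.val:ℤ) - j'.val).natAbs := by
        have h5 := Int.natAbs_dvd_natAbs.mpr h2
        simpa using h5
      have h5 : ((j.val:ℤ) - (j'.val:ℤ)).natAbs < r := by
        have hj := j.isLt
        have hj' := j'.isLt
        omega
      have h6 := Nat.eq_zero_of_dvd_of_lt h4 h5
      apply Fin.ext
      omega
    · rintro rfl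
      exact ⟨((t.val:ℤ) - t'.val), by ring⟩
  have hne : ∀ x y, f x ≠ f y ↔ x ≠ y := fun x y => hinj.ne_iff
  have hfl : ∀ i, (f (Sum.inl i) : G) = a ^ ((e i : ℕ):ℤ) := fun _ => rfl
  have hfr : ∀ p : Fin r × Fin 2,
      (f (Sum.inr p) : G) = a ^ ((p.1.val + p.2.val * r : ℕ):ℤ) * b := fun _ => rfl
  have hcadj : ∀ x y, (commGraph G).Adj x y ↔ (x ≠ y ∧ (x:G) * y = y * x) := fun _ _ => Iff.rfl
  have hTL : ∀ (i i' : Fin (m-2)),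
      ((⊤ : SimpleGraph (Fin (m - 2))) ⊕g completeUnion r 2).Adj (Sum.inl i) (Sum.inl i')
        ↔ i ≠ i' := by intro i i'; simp
  have hTM : ∀ (i : Fin (m-2)) (p : Fin r × Fin 2),
      ¬ ((⊤ : SimpleGraph (Fin (m - 2))) ⊕g completeUnion r 2).Adj (Sum.inl i) (Sum.inr p) := by
    intro i p; simp
  have hTM' : ∀ (i : Fin (m-2)) (p : Fin r × Fin 2),
      ¬ ((⊤ : SimpleGraph (Fin (m - 2))) ⊕g completeUnion r 2).Adj (Sum.inr p) (Sum.inl i) := by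
    intro i p; simp
  have hTR : ∀ (p q : Fin r × Fin 2),
      ((⊤ : SimpleGraph (Fin (m - 2))) ⊕g completeUnion r 2).Adj (Sum.inr p) (Sum.inr q)
        ↔ (p ≠ q ∧ p.1 = q.1) := fun p q => Iff.rfl
  have hadj : ∀ x y, (commGraph G).Adj (f x) (f y) ↔
      ((⊤ : SimpleGraph (Fin (m - 2))) ⊕g completeUnion r 2).Adj x y := by
    rintro (i | ⟨j, t⟩) (i' | ⟨j', t'⟩)
    · rw [hcadj, hne, hfl, hfl, hTL i i']
      simp only [ne_eq, Sum.inl.injEq]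
      exact and_iff_left (hcAA _ _)
    · rw [hcadj, hfl, hfr]
      constructor
      · rintro ⟨-, hc⟩
        exact ((hnotdvd i) ((hcAB _ _).mp hc)).elim
      · intro hA
        exact absurd hA (hTM _ _)
    · rw [hcadj, hfr, hfl]
      constructor
      · rintro ⟨-, hc⟩
        exact ((hnotdvd i') ((hcAB _ _).mp hc.symm)).elim
      · intro hA
        exact absurd hA (hTM' _ _)
    · rw [hcadj, hne, hfr, hfr, hTR]
      constructor
      · rintro ⟨h1, h2⟩
        refine ⟨by simpa using h1, ?_⟩
        exact (hdvd_iff _ _ _ _).mp ((hcBB _ _).mp h2)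
      · rintro ⟨h1, h2⟩
        exact ⟨by simpa using h1, (hcBB _ _).mpr ((hdvd_iff _ _ _ _).mpr h2)⟩
  exact ⟨(RelIso.mk (Equiv.ofBijective f ⟨hinj, hsurj⟩)
    (fun {x y} => hadj x y)).symm⟩
end

section
/- For k ≥ 2, the commuting graph of PSL(2, 2^k) is isomorphic to (2^k + 1)·K_{2^k - 1} ⊔ 2^{k-1}(2^k + 1)·K_{2^k - 2} ⊔ 2^{k-1}(2^k - 1)·K_{2^k}. -/
open Polynomial

section EqGraph

variable {V W : Type*}

/-- The graph of an equivalence relation: distinct related vertices are adjacent. -/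
def eqGraph (s : Setoid V) : SimpleGraph V where
  Adj x y := x ≠ y ∧ s.r x y
  symm := ⟨by rintro x y ⟨h1, h2⟩; exact ⟨h1.symm, s.symm' h2⟩⟩
  loopless := ⟨by rintro x ⟨h, _⟩; exact h rfl⟩

/-- Size of the commuting class of `x`. -/
noncomputable def clsCard (s : Setoid V) (x : V) : ℕ := Nat.card {y : V // s.r x y}

theorem clsCard_eq_fiber (s : Setoid V) (x : V) :
    clsCard s x = Nat.card {y : V // Quotient.mk s y = Quotient.mk s x} := by
  refine Nat.card_congr (Equiv.subtypeEquivRight fun y => ?_)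
  rw [Quotient.eq]
  exact ⟨fun h => s.symm' h, fun h => s.symm' h⟩

theorem aux_count [Finite V] (s : Setoid V) (n : ℕ) :
    Nat.card {q : Quotient s // Nat.card {x : V // Quotient.mk s x = q} = n} * n
      = Nat.card {x : V // clsCard s x = n} := by
  classical
  letI : Fintype V := Fintype.ofFinite V
  have E : {x : V // Nat.card {y : V // Quotient.mk s y = Quotient.mk s x} = n} ≃
      Σ q : {q : Quotient s // Nat.card {x : V // Quotient.mk s x = q} = n},
        {x : V // Quotient.mk s x = q.val} :=
    { toFun := fun x => ⟨⟨Quotient.mk s x.val, x.property⟩, ⟨x.val, rfl⟩⟩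
      invFun := fun p => ⟨p.2.val, by rw [p.2.property]; exact p.1.property⟩
      left_inv := fun x => rfl
      right_inv := by rintro ⟨⟨q, hq⟩, ⟨x, hx⟩⟩; dsimp at hx; subst hx; rfl }
  have h1 : Nat.card {x : V // clsCard s x = n}
      = Nat.card {x : V // Nat.card {y : V // Quotient.mk s y = Quotient.mk s x} = n} := by
    refine Nat.card_congr (Equiv.subtypeEquivRight fun y => ?_)
    rw [clsCard_eq_fiber]
  rw [h1, Nat.card_congr E]
  rw [Nat.card_eq_fintype_card (α := {q : Quotient s // Nat.card {x : V // Quotient.mk s x = q} = n})]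
  rw [Nat.card_eq_fintype_card, Fintype.card_sigma]
  rw [Finset.sum_congr rfl (fun q _ => show Fintype.card {x : V // Quotient.mk s x = q.val} = n by
    rw [← Nat.card_eq_fintype_card]; exact q.property)]
  simp [Finset.sum_const, mul_comm]

theorem eqGraph_iso_of_counts [Finite V] [Finite W] (s : Setoid V) (t : Setoid W)
    (h : ∀ n : ℕ, Nat.card {x : V // clsCard s x = n} = Nat.card {w : W // clsCard t w = n}) :
    Nonempty (eqGraph s ≃g eqGraph t) := by
  classical
  set size : Quotient s → ℕ := fun q => Nat.card {x : V // Quotient.mk s x = q} with hsize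
  set tsize : Quotient t → ℕ := fun q => Nat.card {w : W // Quotient.mk t w = q} with htsize
  have hpos : ∀ q : Quotient s, 0 < size q := by
    refine Quotient.ind (fun x => ?_)
    haveI : Nonempty {y : V // Quotient.mk s y = Quotient.mk s x} := ⟨⟨x, rfl⟩⟩
    exact Nat.card_pos
  have hpos' : ∀ q : Quotient t, 0 < tsize q := by
    refine Quotient.ind (fun x => ?_)
    haveI : Nonempty {y : W // Quotient.mk t y = Quotient.mk t x} := ⟨⟨x, rfl⟩⟩
    exact Nat.card_pos
  have hcards : ∀ n : ℕ, Nat.card {q : Quotient s // size q = n}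
      = Nat.card {q' : Quotient t // tsize q' = n} := by
    intro n
    rcases Nat.eq_zero_or_pos n with rfl | hn
    · haveI e1 : IsEmpty {q : Quotient s // size q = 0} :=
        ⟨fun q => by have := hpos q.val; omega⟩
      haveI e2 : IsEmpty {q : Quotient t // tsize q = 0} :=
        ⟨fun q => by have := hpos' q.val; omega⟩
      rw [Nat.card_of_isEmpty, Nat.card_of_isEmpty]
    · refine Nat.eq_of_mul_eq_mul_right hn ?_
      rw [aux_count s n, aux_count t n, h n]
  have ψ : ∀ n : ℕ, {q : Quotient s // size q = n} ≃ {q' : Quotient t // tsize q' = n} :=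
    fun n => Classical.choice (Finite.card_eq.mp (hcards n))
  set Φ : Quotient s ≃ Quotient t := Equiv.ofFiberEquiv (f := size) (g := tsize) ψ with hΦdef
  have hΦ : ∀ q, tsize (Φ q) = size q := fun q => Equiv.ofFiberEquiv_map ψ q
  have χ : ∀ q' : Quotient t, {x : V // Φ (Quotient.mk s x) = q'} ≃ {w : W // Quotient.mk t w = q'} := by
    intro q'
    refine Classical.choice (Finite.card_eq.mp ?_)
    have h2 : Nat.card {x : V // Φ (Quotient.mk s x) = q'}
        = Nat.card {x : V // Quotient.mk s x = Φ.symm q'} :=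
      Nat.card_congr (Equiv.subtypeEquivRight fun x => by
        rw [← Equiv.eq_symm_apply])
    rw [h2]
    have := hΦ (Φ.symm q')
    rw [Equiv.apply_symm_apply] at this
    exact this.symm
  set e : V ≃ W := Equiv.ofFiberEquiv (f := fun x => Φ (Quotient.mk s x)) (g := Quotient.mk t) χ
      with hedef
  have he : ∀ x, Quotient.mk t (e x) = Φ (Quotient.mk s x) :=
    fun x => Equiv.ofFiberEquiv_map χ x
  refine ⟨⟨e, ?_⟩⟩
  intro a b
  show (e a ≠ e b ∧ t.r (e a) (e b)) ↔ (a ≠ b ∧ s.r a b)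
  have h3 : t.r (e a) (e b) ↔ s.r a b := by
    rw [← Quotient.eq (r := t), ← Quotient.eq (r := s), he, he, Φ.apply_eq_iff_eq]
  rw [e.injective.ne_iff, h3]

end EqGraph

/-- transport of commuting graphs along a group isomorphism -/
def commGraphIsoOfMulEquiv {G H : Type*} [Group G] [Group H] (e : G ≃* H) :
    commGraph G ≃g commGraph H := by
  have hc : ∀ x : G, x ∈ Subgroup.center G ↔ e x ∈ Subgroup.center H := by
    intro x
    simp only [Subgroup.mem_center_iff]
    constructor
    · intro hx h
      calc h * e x = e (e.symm h * x) := by simp [map_mul]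
        _ = e (x * e.symm h) := by rw [hx (e.symm h)]
        _ = e x * h := by simp [map_mul]
    · intro hx g
      apply e.injective
      simpa [map_mul] using hx (e g)
  refine ⟨e.toEquiv.subtypeEquiv (fun x => not_congr (hc x)), ?_⟩
  intro a b
  constructor
  · rintro ⟨h1, h2⟩
    have h2' : e (↑a * ↑b) = e (↑b * ↑a) := by
      rw [map_mul, map_mul]; exact h2
    exact ⟨fun hab => h1 (by rw [hab]), e.injective h2'⟩
  · rintro ⟨h1, h2⟩
    refine ⟨fun hab => h1 (Subtype.ext (e.injective (Subtype.ext_iff.mp hab))), ?_⟩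
    show e ↑a * e ↑b = e ↑b * e ↑a
    rw [← map_mul, ← map_mul, h2]

section sumHelpers

def sumSubtypeEquiv {A B : Type*} (P : A ⊕ B → Prop) :
    {x : A ⊕ B // P x} ≃ {a : A // P (.inl a)} ⊕ {b : B // P (.inr b)} where
  toFun x := match x with
    | ⟨.inl a, h⟩ => .inl ⟨a, h⟩
    | ⟨.inr b, h⟩ => .inr ⟨b, h⟩
  invFun x := match x with
    | .inl ⟨a, h⟩ => ⟨.inl a, h⟩
    | .inr ⟨b, h⟩ => ⟨.inr b, h⟩
  left_inv := by rintro ⟨x | x, h⟩ <;> rfl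
  right_inv := by rintro (⟨a, h⟩ | ⟨b, h⟩) <;> rfl

def prodFstFiber {K m : ℕ} (i : Fin K) : {p : Fin K × Fin m // p.1 = i} ≃ Fin m where
  toFun p := p.val.2
  invFun j := ⟨(i, j), rfl⟩
  left_inv := by rintro ⟨⟨i', j⟩, h⟩; dsimp at h; subst h; rfl
  right_inv := fun j => rfl

variable {K1 K2 K3 m1 m2 m3 : ℕ}

abbrev CUnionT (K1 K2 K3 m1 m2 m3 : ℕ) :=
  ((Fin K1 × Fin m1) ⊕ (Fin K2 × Fin m2)) ⊕ (Fin K3 × Fin m3)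

def cid : CUnionT K1 K2 K3 m1 m2 m3 → (Fin K1 ⊕ Fin K2) ⊕ Fin K3 :=
  Sum.map (Sum.map Prod.fst Prod.fst) Prod.fst

def rhsSetoid (K1 K2 K3 m1 m2 m3 : ℕ) : Setoid (CUnionT K1 K2 K3 m1 m2 m3) :=
  ⟨fun x y => cid x = cid y, ⟨fun _ => rfl, Eq.symm, Eq.trans⟩⟩

theorem rhsSetoid_r (x y : CUnionT K1 K2 K3 m1 m2 m3) :
    rhsSetoid K1 K2 K3 m1 m2 m3 x y ↔ cid x = cid y := Iff.rfl

def rhsIso : eqGraph (rhsSetoid K1 K2 K3 m1 m2 m3) ≃g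
    (completeUnion K1 m1 ⊕g completeUnion K2 m2 ⊕g completeUnion K3 m3) := by
  refine ⟨Equiv.refl _, ?_⟩
  rintro ((⟨a1, a2⟩ | ⟨a1, a2⟩) | ⟨a1, a2⟩) ((⟨b1, b2⟩ | ⟨b1, b2⟩) | ⟨b1, b2⟩) <;>
    show _ ↔ (_ ≠ _ ∧ cid _ = cid _) <;>
    simp only [cid, Sum.map, SimpleGraph.sum_adj, completeUnion, Equiv.refl_apply,
      ne_eq, Sum.inl.injEq, Sum.inr.injEq, Prod.mk.injEq, not_and, Function.comp] <;>
    try tauto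
  all_goals try simp

theorem rhs_clsCard (w : CUnionT K1 K2 K3 m1 m2 m3) :
    clsCard (rhsSetoid K1 K2 K3 m1 m2 m3) w =
      Sum.elim (Sum.elim (fun _ => m1) (fun _ => m2)) (fun _ => m3) (cid w) := by
  obtain ((⟨i, j⟩ | ⟨i, j⟩) | ⟨i, j⟩) := w
  · refine Nat.card_eq_of_equiv_fin ?_
    refine { toFun := ?_, invFun := fun j' => ⟨.inl (.inl (i, j')), rfl⟩,
             left_inv := ?_, right_inv := ?_ }
    · rintro ⟨(⟨a, b⟩ | ⟨a, b⟩) | ⟨a, b⟩, h⟩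
      · exact b
      · exact absurd ((rhsSetoid_r _ _).mp h) (by simp [cid])
      · exact absurd ((rhsSetoid_r _ _).mp h) (by simp [cid])
    · rintro ⟨(⟨a, b⟩ | ⟨a, b⟩) | ⟨a, b⟩, h⟩
      · obtain rfl : i = a := by simpa [cid] using (rhsSetoid_r _ _).mp h
        rfl
      · exact absurd ((rhsSetoid_r _ _).mp h) (by simp [cid])
      · exact absurd ((rhsSetoid_r _ _).mp h) (by simp [cid])
    · intro j'; rfl
  · refine Nat.card_eq_of_equiv_fin ?_
    refine { toFun := ?_, invFun := fun j' => ⟨.inl (.inr (i, j')), rfl⟩,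
             left_inv := ?_, right_inv := ?_ }
    · rintro ⟨(⟨a, b⟩ | ⟨a, b⟩) | ⟨a, b⟩, h⟩
      · exact absurd ((rhsSetoid_r _ _).mp h) (by simp [cid])
      · exact b
      · exact absurd ((rhsSetoid_r _ _).mp h) (by simp [cid])
    · rintro ⟨(⟨a, b⟩ | ⟨a, b⟩) | ⟨a, b⟩, h⟩
      · exact absurd ((rhsSetoid_r _ _).mp h) (by simp [cid])
      · obtain rfl : i = a := by simpa [cid] using (rhsSetoid_r _ _).mp h
        rfl
      · exact absurd ((rhsSetoid_r _ _).mp h) (by simp [cid])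
    · intro j'; rfl
  · refine Nat.card_eq_of_equiv_fin ?_
    refine { toFun := ?_, invFun := fun j' => ⟨.inr (i, j'), rfl⟩,
             left_inv := ?_, right_inv := ?_ }
    · rintro ⟨(⟨a, b⟩ | ⟨a, b⟩) | ⟨a, b⟩, h⟩
      · exact absurd ((rhsSetoid_r _ _).mp h) (by simp [cid])
      · exact absurd ((rhsSetoid_r _ _).mp h) (by simp [cid])
      · exact b
    · rintro ⟨(⟨a, b⟩ | ⟨a, b⟩) | ⟨a, b⟩, h⟩
      · exact absurd ((rhsSetoid_r _ _).mp h) (by simp [cid])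
      · exact absurd ((rhsSetoid_r _ _).mp h) (by simp [cid])
      · obtain rfl : i = a := by simpa [cid] using (rhsSetoid_r _ _).mp h
        rfl
    · intro j'; rfl

theorem rhs_count (n : ℕ) :
    Nat.card {w : CUnionT K1 K2 K3 m1 m2 m3 // clsCard (rhsSetoid K1 K2 K3 m1 m2 m3) w = n} =
      (if m1 = n then K1 * m1 else 0) + (if m2 = n then K2 * m2 else 0)
        + (if m3 = n then K3 * m3 else 0) := by
  rw [Nat.card_congr ((sumSubtypeEquiv _).trans (Equiv.sumCongr (sumSubtypeEquiv _) (Equiv.refl _)))]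
  rw [Nat.card_sum, Nat.card_sum]
  have c1 : Nat.card {p : Fin K1 × Fin m1 //
      clsCard (rhsSetoid K1 K2 K3 m1 m2 m3) (.inl (.inl p)) = n} = if m1 = n then K1 * m1 else 0 := by
    have : ∀ p : Fin K1 × Fin m1, clsCard (rhsSetoid K1 K2 K3 m1 m2 m3) (.inl (.inl p)) = m1 :=
      fun p => rhs_clsCard _
    split_ifs with h
    · rw [Nat.card_congr (Equiv.subtypeUnivEquiv (fun p => by rw [this p, h]))]
      simp [Nat.card_eq_fintype_card]
    · haveI : IsEmpty {p : Fin K1 × Fin m1 //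
          clsCard (rhsSetoid K1 K2 K3 m1 m2 m3) (.inl (.inl p)) = n} :=
        ⟨fun p => h (by rw [← p.property, this p.val])⟩
      exact Nat.card_of_isEmpty
  have c2 : Nat.card {p : Fin K2 × Fin m2 //
      clsCard (rhsSetoid K1 K2 K3 m1 m2 m3) (.inl (.inr p)) = n} = if m2 = n then K2 * m2 else 0 := by
    have : ∀ p : Fin K2 × Fin m2, clsCard (rhsSetoid K1 K2 K3 m1 m2 m3) (.inl (.inr p)) = m2 :=
      fun p => rhs_clsCard _
    split_ifs with h
    · rw [Nat.card_congr (Equiv.subtypeUnivEquiv (fun p => by rw [this p, h]))]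
      simp [Nat.card_eq_fintype_card]
    · haveI : IsEmpty {p : Fin K2 × Fin m2 //
          clsCard (rhsSetoid K1 K2 K3 m1 m2 m3) (.inl (.inr p)) = n} :=
        ⟨fun p => h (by rw [← p.property, this p.val])⟩
      exact Nat.card_of_isEmpty
  have c3 : Nat.card {p : Fin K3 × Fin m3 //
      clsCard (rhsSetoid K1 K2 K3 m1 m2 m3) (.inr p) = n} = if m3 = n then K3 * m3 else 0 := by
    have : ∀ p : Fin K3 × Fin m3, clsCard (rhsSetoid K1 K2 K3 m1 m2 m3) (.inr p) = m3 :=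
      fun p => rhs_clsCard _
    split_ifs with h
    · rw [Nat.card_congr (Equiv.subtypeUnivEquiv (fun p => by rw [this p, h]))]
      simp [Nat.card_eq_fintype_card]
    · haveI : IsEmpty {p : Fin K3 × Fin m3 //
          clsCard (rhsSetoid K1 K2 K3 m1 m2 m3) (.inr p) = n} :=
        ⟨fun p => h (by rw [← p.property, this p.val])⟩
      exact Nat.card_of_isEmpty
  rw [c1, c2, c3]

end sumHelpers


open Matrix

section SL2sec
variable {F : Type*} [Field F] [Fintype F] [DecidableEq F]

local notation "SL2" => Matrix.SpecialLinearGroup (Fin 2) F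
local notation "M2" => Matrix (Fin 2) (Fin 2) F

theorem charP_two_of_card {k : ℕ} (hk : 1 ≤ k) (hF : Fintype.card F = 2 ^ k) : CharP F 2 := by
  obtain ⟨p, hchar⟩ := CharP.exists F
  haveI := hchar
  obtain ⟨n, hp, hcard⟩ := FiniteField.card F p
  rw [hF] at hcard
  have hdvd : p ∣ 2 ^ k := hcard ▸ dvd_pow_self p n.pos.ne'
  have : p = 2 := (Nat.prime_dvd_prime_iff_eq hp Nat.prime_two).mp (hp.dvd_of_dvd_pow hdvd)
  exact this ▸ hchar

variable [CharP F 2]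

theorem sq_eq_one_char_two {x : F} (h : x * x = 1) : x = 1 := by
  have c2 : (2 : F) = 0 := CharTwo.two_eq_zero
  have h2 : (x - 1) ^ 2 = 0 := by linear_combination h + (1 - x) * c2
  have := pow_eq_zero_iff (n := 2) (by norm_num) |>.mp h2
  exact sub_eq_zero.mp this

theorem not_scalar_of_ne_one (g : SL2) (hg : g ≠ 1) :
    ¬((g : M2) 0 1 = 0 ∧ (g : M2) 1 0 = 0 ∧ (g : M2) 0 0 = (g : M2) 1 1) := by
  rintro ⟨h1, h2, h3⟩
  have hdet : (g : M2).det = 1 := g.prop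
  rw [Matrix.det_fin_two, h1, h2, ← h3] at hdet
  simp only [mul_zero, sub_zero] at hdet
  have h00 : (g : M2) 0 0 = 1 := sq_eq_one_char_two hdet
  apply hg
  apply Subtype.ext
  rw [Matrix.eta_fin_two (g : M2), h1, h2, ← h3, h00]
  rw [show ((1 : SL2) : M2) = 1 from rfl, Matrix.one_fin_two]

theorem commute_span (g : SL2) (hg : g ≠ 1) (B : M2)
    (hB : B * (g : M2) = (g : M2) * B) : ∃ a b : F, B = a • (1 : M2) + b • (g : M2) := by
  set G : M2 := (g : M2) with hG
  have h00 := congrFun (congrFun hB 0) 0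
  have h01 := congrFun (congrFun hB 0) 1
  have h10 := congrFun (congrFun hB 1) 0
  have h11 := congrFun (congrFun hB 1) 1
  simp only [Matrix.mul_apply, Fin.sum_univ_two] at h00 h01 h10 h11
  have key : ∀ a b : F, (B 0 0 = a + b * G 0 0 ∧ B 0 1 = b * G 0 1 ∧
      B 1 0 = b * G 1 0 ∧ B 1 1 = a + b * G 1 1) → B = a • (1 : M2) + b • G := by
    intro a b ⟨e1, e2, e3, e4⟩
    ext i j
    fin_cases i <;> fin_cases j <;>
      simp [Matrix.add_apply, Matrix.smul_apply, Matrix.one_apply, e1, e2, e3, e4]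
  have ns := not_scalar_of_ne_one g hg
  rw [← hG] at ns
  by_cases hq : G 0 1 = 0
  · by_cases hr : G 1 0 = 0
    · have hd : G 0 0 - G 1 1 ≠ 0 := by
        intro h
        exact ns ⟨hq, hr, by linear_combination h⟩
      have hB01 : B 0 1 = 0 := by
        have : B 0 1 * (G 1 1 - G 0 0) = 0 := by linear_combination h01 + (B 1 1 - B 0 0) * hq
        rcases mul_eq_zero.mp this with h | h
        · exact h
        · exact absurd (by linear_combination -h) hd
      have hB10 : B 1 0 = 0 := by
        have : B 1 0 * (G 0 0 - G 1 1) = 0 := by linear_combination h10 + (B 0 0 - B 1 1) * hr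
        rcases mul_eq_zero.mp this with h | h
        · exact h
        · exact absurd h hd
      refine ⟨B 0 0 - (B 0 0 - B 1 1) / (G 0 0 - G 1 1) * G 0 0,
        (B 0 0 - B 1 1) / (G 0 0 - G 1 1), key _ _ ⟨by ring, ?_, ?_, ?_⟩⟩
      · rw [hB01, hq, mul_zero]
      · rw [hB10, hr, mul_zero]
      · field_simp
        ring
    · have hB01 : B 0 1 = 0 := by
        have : B 0 1 * G 1 0 = 0 := by linear_combination h00 + B 1 0 * hq
        rcases mul_eq_zero.mp this with h | h
        · exact h
        · exact absurd h hr
      refine ⟨B 0 0 - B 1 0 / G 1 0 * G 0 0, B 1 0 / G 1 0, key _ _ ⟨by ring, ?_, ?_, ?_⟩⟩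
      · rw [hB01, hq, mul_zero]
      · field_simp
      · field_simp
        linear_combination h10
  · refine ⟨B 0 0 - B 0 1 / G 0 1 * G 0 0, B 0 1 / G 0 1, key _ _ ⟨by ring, ?_, ?_, ?_⟩⟩
    · field_simp
    · field_simp
      linear_combination -h00
    · field_simp
      linear_combination -h01


theorem center_SL2_eq_bot : Subgroup.center SL2 = ⊥ := by
  rw [eq_bot_iff]
  intro A hA
  obtain ⟨r, hr, hrA⟩ := Matrix.SpecialLinearGroup.mem_center_iff.mp hA
  rw [Fintype.card_fin] at hr
  have hr1 : r = 1 := sq_eq_one_char_two (by rw [← sq]; exact hr)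
  rw [Subgroup.mem_bot]
  apply Subtype.ext
  rw [← hrA, hr1]
  simp

/-- centralizers in SL(2,F) are commutative (matrix level) -/
theorem cent_comm (g : SL2) (hg : g ≠ 1) (B C : M2)
    (hB : B * (g : M2) = (g : M2) * B) (hC : C * (g : M2) = (g : M2) * C) :
    B * C = C * B := by
  obtain ⟨a, b, rfl⟩ := commute_span g hg B hB
  obtain ⟨c, d, rfl⟩ := commute_span g hg C hC
  simp only [add_mul, mul_add, smul_mul_assoc, mul_smul_comm, smul_add, smul_smul, one_mul,
    mul_one]
  rw [mul_comm a c, mul_comm a d, mul_comm b c, mul_comm b d]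
  abel

theorem det_smul_one_add_smul (g : SL2) (a b : F) :
    (a • (1 : M2) + b • (g : M2)).det
      = a ^ 2 + (g : M2).trace * a * b + b ^ 2 := by
  have hdet : (g : M2) 0 0 * (g : M2) 1 1 - (g : M2) 0 1 * (g : M2) 1 0 = 1 := by
    have := g.prop
    rwa [Matrix.det_fin_two] at this
  rw [Matrix.det_fin_two, Matrix.trace_fin_two]
  simp only [Matrix.add_apply, Matrix.smul_apply, Matrix.one_apply, smul_eq_mul]
  norm_num
  linear_combination b ^ 2 * hdet

theorem smul_inj (g : SL2) (hg : g ≠ 1) {a b a' b' : F}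
    (h : a • (1 : M2) + b • (g : M2) = a' • (1 : M2) + b' • (g : M2)) : a = a' ∧ b = b' := by
  have ns := not_scalar_of_ne_one g hg
  have h00 := congrFun (congrFun h 0) 0
  have h01 := congrFun (congrFun h 0) 1
  have h10 := congrFun (congrFun h 1) 0
  have h11 := congrFun (congrFun h 1) 1
  simp only [Matrix.add_apply, Matrix.smul_apply, Matrix.one_apply, smul_eq_mul, if_pos,
    Fin.zero_eq_one_iff, Fin.one_eq_zero_iff, if_neg, mul_zero, mul_one, ite_true, ite_false,
    Nat.succ_ne_self, zero_add, add_zero] at h00 h01 h10 h11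
  norm_num at h00 h01 h10 h11
  have hbb : b = b' := by
    rcases h01 with h | hq
    · exact h
    rcases h10 with h | hr
    · exact h
    have hd : (g : M2) 0 0 ≠ (g : M2) 1 1 := fun hd => ns ⟨hq, hr, hd⟩
    have hz : (b - b') * ((g : M2) 0 0 - (g : M2) 1 1) = 0 := by linear_combination h00 - h11
    rcases mul_eq_zero.mp hz with h | h
    · exact sub_eq_zero.mp h
    · exact absurd (sub_eq_zero.mp h) hd
  subst hbb
  exact ⟨by linear_combination h00, rfl⟩

theorem smul_comm_g (g : SL2) (a b : F) :
    (a • (1 : M2) + b • (g : M2)) * (g : M2) = (g : M2) * (a • (1 : M2) + b • (g : M2)) := by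
  simp only [add_mul, mul_add, smul_mul_assoc, mul_smul_comm, one_mul, mul_one]

/-- the centralizer of a nonidentity element, as solutions of the norm equation -/
noncomputable def centEquiv (g : SL2) (hg : g ≠ 1) :
    {p : F × F // p.1 ^ 2 + (g : M2).trace * p.1 * p.2 + p.2 ^ 2 = 1} ≃
      {h : SL2 // (h : M2) * (g : M2) = (g : M2) * (h : M2)} := by
  refine Equiv.ofBijective
    (fun p => ⟨⟨p.val.1 • (1 : M2) + p.val.2 • (g : M2), by
        rw [det_smul_one_add_smul]; exact p.property⟩, smul_comm_g g _ _⟩) ⟨?_, ?_⟩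
  · rintro ⟨⟨a, b⟩, hp⟩ ⟨⟨a', b'⟩, hp'⟩ h
    have := smul_inj g hg (Subtype.ext_iff.mp (Subtype.ext_iff.mp h))
    simp only [Subtype.mk.injEq, Prod.mk.injEq]
    exact this
  · rintro ⟨h, hcomm⟩
    obtain ⟨a, b, hab⟩ := commute_span g hg (h : M2) hcomm
    have hdet : a ^ 2 + (g : M2).trace * a * b + b ^ 2 = 1 := by
      rw [← det_smul_one_add_smul g a b, ← hab]; exact h.prop
    exact ⟨⟨(a, b), hdet⟩, Subtype.ext (Subtype.ext hab.symm)⟩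

theorem centEquiv_one (g : SL2) (hg : g ≠ 1) (p) :
    (centEquiv g hg p).val = 1 ↔ p.val = (1, 0) := by
  constructor
  · intro h1
    have h2 : p.val.1 • (1 : M2) + p.val.2 • (g : M2)
        = (1 : F) • (1 : M2) + (0 : F) • (g : M2) := by
      have := Subtype.ext_iff.mp h1
      rw [one_smul, zero_smul, add_zero]; exact this
    have := smul_inj g hg h2
    exact Prod.ext this.1 this.2
  · intro h
    apply Subtype.ext
    show p.val.1 • (1 : M2) + p.val.2 • (g : M2) = 1
    rw [h]
    simp


/-- number of roots of x^2+tx+1 -/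
noncomputable def rcount (t : F) : ℕ := Nat.card {a : F // a ^ 2 + t * a + 1 = 0}

theorem rcount_zero : rcount (0 : F) = 1 := by
  have c2 : (2 : F) = 0 := CharTwo.two_eq_zero
  have : ∀ a : F, a ^ 2 + 0 * a + 1 = 0 ↔ a = 1 := by
    intro a
    constructor
    · intro h
      have h2 : (a - 1) ^ 2 = 0 := by linear_combination h - a * c2
      exact sub_eq_zero.mp (pow_eq_zero_iff (n := 2) (by norm_num) |>.mp h2)
    · rintro rfl
      linear_combination c2
  rw [rcount, Nat.card_congr (Equiv.subtypeEquivRight this), Nat.card_eq_fintype_card,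
    Fintype.card_subtype_eq]

theorem rcount_root {t : F} (ht : t ≠ 0) {r0 : F} (hr : r0 ^ 2 + t * r0 + 1 = 0) :
    rcount t = 2 := by
  have c2 : (2 : F) = 0 := CharTwo.two_eq_zero
  have key : ∀ a : F, a ^ 2 + t * a + 1 = 0 ↔ a = r0 ∨ a = r0 + t := by
    intro a
    constructor
    · intro h
      have hz : (a - r0) * (a - (r0 + t)) = 0 := by
        linear_combination h - hr + (r0 ^ 2 + r0 * t - a * r0 - a * t) * c2
      rcases mul_eq_zero.mp hz with h | h
      · exact Or.inl (sub_eq_zero.mp h)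
      · exact Or.inr (sub_eq_zero.mp h)
    · rintro (rfl | rfl)
      · exact hr
      · linear_combination hr + (t * r0 + t * t) * c2
  have hne : r0 ≠ r0 + t := fun h => ht (left_eq_add.mp h)
  rw [rcount, Nat.card_congr (Equiv.subtypeEquivRight key), Nat.card_eq_fintype_card,
    Fintype.card_subtype]
  rw [show (Finset.univ.filter fun a : F => a = r0 ∨ a = r0 + t) = {r0, r0 + t} by
    ext a; simp]
  rw [Finset.card_insert_of_notMem (by simp [hne]), Finset.card_singleton]

theorem rcount_no_root {t : F} (h : ¬∃ a : F, a ^ 2 + t * a + 1 = 0) : rcount t = 0 := by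
  haveI : IsEmpty {a : F // a ^ 2 + t * a + 1 = 0} := ⟨fun a => h ⟨a.val, a.property⟩⟩
  exact Nat.card_of_isEmpty

theorem zero_has_root : ∃ a : F, a ^ 2 + (0 : F) * a + 1 = 0 := by
  have c2 : (2 : F) = 0 := CharTwo.two_eq_zero
  exact ⟨1, by linear_combination c2⟩

end SL2sec
def prodSubtypeSndEquivSigma {α β : Type*} (P : α × β → Prop) :
    {p : α × β // P p} ≃ Σ b : β, {a : α // P (a, b)} where
  toFun p := ⟨p.val.2, p.val.1, by simpa using p.property⟩
  invFun x := ⟨(x.2.val, x.1), x.2.property⟩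
  left_inv := by rintro ⟨⟨a, b⟩, h⟩; rfl
  right_inv := by rintro ⟨b, a, h⟩; rfl

def subtypeFiberSigma {α β : Type*} (f : α → β) (P : β → Prop) :
    {x : α // P (f x)} ≃ Σ t : {t : β // P t}, {x : α // f x = t.val} where
  toFun x := ⟨⟨f x.val, x.property⟩, x.val, rfl⟩
  invFun p := ⟨p.2.val, by rw [p.2.property]; exact p.1.property⟩
  left_inv := by rintro ⟨x, h⟩; rfl
  right_inv := by rintro ⟨⟨t, ht⟩, ⟨x, hx⟩⟩; dsimp at hx; subst hx; rfl

theorem nat_card_sigma {β : Type*} [Fintype β] (f : β → Type*) [∀ b, Fintype (f b)] :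
    Nat.card (Σ b, f b) = ∑ b, Nat.card (f b) := by
  rw [Nat.card_eq_fintype_card, Fintype.card_sigma]
  exact Finset.sum_congr rfl fun b _ => (Nat.card_eq_fintype_card).symm

section SL2sec2
variable {F : Type*} [Field F] [Fintype F] [DecidableEq F] [CharP F 2]

local notation "SL2" => Matrix.SpecialLinearGroup (Fin 2) F
local notation "M2" => Matrix (Fin 2) (Fin 2) F

theorem sq_surj : ∀ c : F, ∃ s : F, s * s = c := by
  have c2 : (2 : F) = 0 := CharTwo.two_eq_zero
  have hinj : Function.Injective (fun x : F => x * x) := by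
    intro x y h
    have h2 : (x - y) ^ 2 = 0 := by linear_combination h + (y ^ 2 - x * y) * c2
    exact sub_eq_zero.mp (pow_eq_zero_iff (n := 2) (by norm_num) |>.mp h2)
  intro c
  exact Finite.injective_iff_surjective.mp hinj c

theorem Z_card_eq (t : F) :
    Nat.card {p : F × F // p.1 ^ 2 + t * p.1 * p.2 + p.2 ^ 2 = 0}
      = 1 + (Fintype.card F - 1) * rcount t := by
  classical
  rw [Nat.card_congr (prodSubtypeSndEquivSigma _), nat_card_sigma]
  rw [← Finset.sum_erase_add _ _ (Finset.mem_univ (0 : F))]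
  have h0 : Nat.card {a : F // a ^ 2 + t * a * 0 + 0 ^ 2 = 0} = 1 := by
    have hiff : ∀ a : F, a ^ 2 + t * a * 0 + 0 ^ 2 = 0 ↔ a = 0 := by
      intro a
      constructor
      · intro h
        have h2 : a ^ 2 = 0 := by linear_combination h
        exact pow_eq_zero_iff (n := 2) (by norm_num) |>.mp h2
      · rintro rfl; ring
    rw [Nat.card_congr (Equiv.subtypeEquivRight hiff), Nat.card_eq_fintype_card,
      Fintype.card_subtype_eq]
  have hb : ∀ b : F, b ≠ 0 → Nat.card {a : F // a ^ 2 + t * a * b + b ^ 2 = 0} = rcount t := by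
    intro b hbne
    refine (Nat.card_congr ((Equiv.mulRight₀ b hbne).subtypeEquiv fun x => ?_)).symm
    show x ^ 2 + t * x + 1 = 0 ↔ (x * b) ^ 2 + t * (x * b) * b + b ^ 2 = 0
    have hexp : (x * b) ^ 2 + t * (x * b) * b + b ^ 2 = b ^ 2 * (x ^ 2 + t * x + 1) := by ring
    rw [hexp]
    constructor
    · intro h; rw [h, mul_zero]
    · intro h
      exact (mul_eq_zero.mp h).resolve_left (pow_ne_zero 2 hbne)
  rw [Finset.sum_congr rfl (fun b hbm => hb b (Finset.ne_of_mem_erase hbm))]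
  rw [Finset.sum_const, smul_eq_mul, h0]
  rw [Finset.card_erase_of_mem (Finset.mem_univ _), Finset.card_univ]
  ring

theorem M_card_eq (t : F) :
    Fintype.card F ^ 2 =
      Nat.card {p : F × F // p.1 ^ 2 + t * p.1 * p.2 + p.2 ^ 2 = 0}
        + (Fintype.card F - 1)
          * Nat.card {p : F × F // p.1 ^ 2 + t * p.1 * p.2 + p.2 ^ 2 = 1} := by
  classical
  have htot : Fintype.card F ^ 2
      = ∑ c : F, Nat.card {p : F × F // p.1 ^ 2 + t * p.1 * p.2 + p.2 ^ 2 = c} := by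
    rw [← nat_card_sigma]
    rw [Nat.card_congr (Equiv.sigmaFiberEquiv (fun p : F × F => p.1 ^ 2 + t * p.1 * p.2 + p.2 ^ 2))]
    rw [Nat.card_eq_fintype_card, Fintype.card_prod, sq]
  rw [htot, ← Finset.sum_erase_add _ _ (Finset.mem_univ (0 : F)), add_comm]
  congr 1
  have hc : ∀ c : F, c ≠ 0 →
      Nat.card {p : F × F // p.1 ^ 2 + t * p.1 * p.2 + p.2 ^ 2 = c}
        = Nat.card {p : F × F // p.1 ^ 2 + t * p.1 * p.2 + p.2 ^ 2 = 1} := by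
    intro c hcne
    obtain ⟨s, hs⟩ := sq_surj (F := F) c
    have hsne : s ≠ 0 := by
      rintro rfl
      exact hcne (by rw [← hs, mul_zero])
    refine (Nat.card_congr (((Equiv.mulLeft₀ s hsne).prodCongr
      (Equiv.mulLeft₀ s hsne)).subtypeEquiv fun p => ?_)).symm
    show p.1 ^ 2 + t * p.1 * p.2 + p.2 ^ 2 = 1 ↔
      (s * p.1) ^ 2 + t * (s * p.1) * (s * p.2) + (s * p.2) ^ 2 = c
    have hexp : (s * p.1) ^ 2 + t * (s * p.1) * (s * p.2) + (s * p.2) ^ 2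
        = c * (p.1 ^ 2 + t * p.1 * p.2 + p.2 ^ 2) := by
      rw [← hs]; ring
    rw [hexp]
    constructor
    · intro h; rw [h, mul_one]
    · intro h
      have := mul_left_cancel₀ hcne (by rw [h, mul_one] : c * (p.1 ^ 2 + t * p.1 * p.2 + p.2 ^ 2) = c * 1)
      exact this
  rw [Finset.sum_congr rfl (fun c hcm => hc c (Finset.ne_of_mem_erase hcm))]
  rw [Finset.sum_const, smul_eq_mul]
  rw [Finset.card_erase_of_mem (Finset.mem_univ _), Finset.card_univ]

end SL2sec2


section SL2sec3
variable {F : Type*} [Field F] [Fintype F] [DecidableEq F] [CharP F 2]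

local notation "SL2" => Matrix.SpecialLinearGroup (Fin 2) F
local notation "M2" => Matrix (Fin 2) (Fin 2) F

theorem mul_fiber_card (e : F) :
    Nat.card {p : F × F // p.1 * p.2 = e}
      = if e = 0 then 2 * Fintype.card F - 1 else Fintype.card F - 1 := by
  classical
  split_ifs with he
  · subst he
    rw [Nat.card_eq_fintype_card, Fintype.card_subtype]
    have hset : (Finset.univ.filter fun p : F × F => p.1 * p.2 = 0)
        = (({0} : Finset F) ×ˢ Finset.univ) ∪ (Finset.univ ×ˢ ({0} : Finset F)) := by
      ext p
      simp [mul_eq_zero, Prod.ext_iff, eq_comm]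
    rw [hset]
    have hinter : (({0} : Finset F) ×ˢ Finset.univ) ∩ (Finset.univ ×ˢ ({0} : Finset F))
        = ({0} : Finset F) ×ˢ ({0} : Finset F) := by
      ext p
      simp [Prod.ext_iff, eq_comm, and_comm]
    have := Finset.card_union_add_card_inter (({0} : Finset F) ×ˢ Finset.univ)
      (Finset.univ ×ˢ ({0} : Finset F))
    rw [hinter] at this
    simp only [Finset.card_product, Finset.card_singleton, Finset.card_univ, one_mul,
      mul_one] at this
    have hq : 1 ≤ Fintype.card F := Fintype.card_pos
    omega
  · have E : {p : F × F // p.1 * p.2 = e} ≃ {b : F // b ≠ 0} :=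
      { toFun := fun p => ⟨p.val.1, fun h => he (by rw [← p.property, h, zero_mul])⟩
        invFun := fun b => ⟨(b.val, b.val⁻¹ * e), by
          rw [← mul_assoc, mul_inv_cancel₀ b.property, one_mul]⟩
        left_inv := by
          rintro ⟨⟨a, b⟩, h⟩
          have ha : a ≠ 0 := fun h0 => he (by rw [← h, h0, zero_mul])
          apply Subtype.ext
          dsimp at h ⊢
          rw [← h, ← mul_assoc, inv_mul_cancel₀ ha, one_mul]
        right_inv := fun b => rfl }
    rw [Nat.card_congr E, Nat.card_eq_fintype_card, Fintype.card_subtype]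
    rw [show (Finset.univ.filter fun b : F => b ≠ 0) = Finset.univ.erase 0 by
      ext b; simp [Finset.mem_erase, and_comm]]
    rw [Finset.card_erase_of_mem (Finset.mem_univ _), Finset.card_univ]

theorem trace_matrix_one : (((1 : SL2) : M2)).trace = 0 := by
  have c2 : (2 : F) = 0 := CharTwo.two_eq_zero
  rw [show ((1 : SL2) : M2) = 1 from rfl, Matrix.trace_one]
  simpa using c2

/-- the fibration of SL2 with fixed trace over the (0,0) entry -/
noncomputable def traceFiberEquiv (t : F) :
    {g : SL2 // ((g : M2)).trace = t} ≃
      Σ a : F, {p : F × F // p.1 * p.2 = a * (a + t) + 1} := by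
  classical
  have c2 : (2 : F) = 0 := CharTwo.two_eq_zero
  refine
    { toFun := fun g => ⟨(g.val : M2) 0 0, ((g.val : M2) 0 1, (g.val : M2) 1 0), ?_⟩
      invFun := fun x => ⟨⟨!![x.1, x.2.val.1; x.2.val.2, x.1 + t], ?_⟩, ?_⟩
      left_inv := ?_
      right_inv := ?_ }
  · have hdet : (g.val : M2) 0 0 * (g.val : M2) 1 1 - (g.val : M2) 0 1 * (g.val : M2) 1 0 = 1 := by
      have := g.val.prop
      rwa [Matrix.det_fin_two] at this
    have htr : (g.val : M2) 0 0 + (g.val : M2) 1 1 = t := by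
      have := g.property
      rwa [Matrix.trace_fin_two] at this
    dsimp
    linear_combination (-1 : F) * hdet + (g.val : M2) 0 0 * htr
      + (-((g.val : M2) 0 0 ^ 2) - 1) * c2
  · show Matrix.det _ = 1
    rw [Matrix.det_fin_two_of]
    have h := x.2.property
    linear_combination (-1 : F) * h - c2
  · show Matrix.trace _ = t
    rw [Matrix.trace_fin_two]
    show x.1 + (x.1 + t) = t
    linear_combination x.1 * c2
  · rintro ⟨g, hg⟩
    have htr : (g : M2) 0 0 + (g : M2) 1 1 = t := by
      have := hg
      rwa [Matrix.trace_fin_two] at this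
    apply Subtype.ext
    apply Subtype.ext
    show !![(g : M2) 0 0, (g : M2) 0 1; (g : M2) 1 0, (g : M2) 0 0 + t] = (g : M2)
    have hg11 : (g : M2) 0 0 + t = (g : M2) 1 1 := by
      linear_combination (-1 : F) * htr + (g : M2) 0 0 * c2
    conv_rhs => rw [Matrix.eta_fin_two (g : M2)]
    rw [hg11]
  · rintro ⟨a, ⟨⟨b, c⟩, h⟩⟩
    rfl

end SL2sec3

section SL2sec4
variable {F : Type*} [Field F] [Fintype F] [DecidableEq F] [CharP F 2]

local notation "SL2" => Matrix.SpecialLinearGroup (Fin 2) F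
local notation "M2" => Matrix (Fin 2) (Fin 2) F
local notation "q" => Fintype.card F

theorem N_card_eq (t : F) :
    Nat.card {g : SL2 // ((g : M2)).trace = t} = q * (q - 1) + rcount t * q := by
  classical
  rw [Nat.card_congr (traceFiberEquiv t), nat_card_sigma]
  have hsum : ∀ a : F, Nat.card {p : F × F // p.1 * p.2 = a * (a + t) + 1}
      = if a ^ 2 + t * a + 1 = 0 then 2 * q - 1 else q - 1 := by
    intro a
    rw [mul_fiber_card]
    have hiff : (a * (a + t) + 1 = 0) ↔ (a ^ 2 + t * a + 1 = 0) :=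
      ⟨fun h => by linear_combination h, fun h => by linear_combination h⟩
    simp only [hiff]
  rw [Finset.sum_congr rfl (fun a _ => hsum a), Finset.sum_ite, Finset.sum_const,
    Finset.sum_const, smul_eq_mul, smul_eq_mul]
  have hr : (Finset.univ.filter fun a : F => a ^ 2 + t * a + 1 = 0).card = rcount t := by
    rw [rcount, Nat.card_eq_fintype_card, Fintype.card_subtype]
  have htot := Finset.card_filter_add_card_filter_not
    (s := (Finset.univ : Finset F)) (p := fun a : F => a ^ 2 + t * a + 1 = 0)
  rw [Finset.card_univ] at htot
  rw [hr]
  have hrle : rcount t ≤ q := by omega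
  have hcompl : (Finset.univ.filter fun a : F => ¬(a ^ 2 + t * a + 1 = 0)).card
      = q - rcount t := by omega
  rw [hcompl]
  have hq1 : 1 ≤ q := Fintype.card_pos
  zify [hrle, hq1, show 1 ≤ 2 * q by omega]
  ring

/-- traces admitting a root, other than 0 -/
noncomputable def splitS (F : Type*) [Field F] [Fintype F] [DecidableEq F] : Finset F :=
  Finset.univ.filter fun t => t ≠ 0 ∧ ∃ a : F, a ^ 2 + t * a + 1 = 0

theorem two_mul_splitS_card : 2 * (splitS F).card = q - 2 := by
  classical
  set D : Finset F := Finset.univ.filter (fun l : F => l ≠ 0 ∧ l ≠ 1) with hD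
  have c2 : (2 : F) = 0 := CharTwo.two_eq_zero
  have hmap : ∀ l ∈ D, l + l⁻¹ ∈ splitS F := by
    intro l hl
    rw [hD, Finset.mem_filter] at hl
    obtain ⟨-, hl0, hl1⟩ := hl
    rw [splitS, Finset.mem_filter]
    refine ⟨Finset.mem_univ _, ?_, ⟨l, ?_⟩⟩
    · intro h
      have hinv : l * l⁻¹ = 1 := mul_inv_cancel₀ hl0
      have hll : l * l + 1 = 0 := by linear_combination l * h - hinv
      have hl2 : (l - 1) ^ 2 = 0 := by linear_combination hll - l * c2
      exact hl1 (sub_eq_zero.mp (pow_eq_zero_iff (n := 2) (by norm_num) |>.mp hl2))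
    · have hinv : l * l⁻¹ = 1 := mul_inv_cancel₀ hl0
      linear_combination hinv + (l ^ 2 + 1) * c2
  have hfib : ∀ s ∈ splitS F, (D.filter fun l => l + l⁻¹ = s).card = 2 := by
    intro s hs
    rw [splitS, Finset.mem_filter] at hs
    obtain ⟨-, hs0, r0, hr0⟩ := hs
    have hr00 : r0 ≠ 0 := by
      rintro rfl
      simp at hr0
    have key : ∀ a : F, a ^ 2 + s * a + 1 = 0 ↔ a = r0 ∨ a = r0 + s := by
      intro a
      constructor
      · intro h
        have hz : (a - r0) * (a - (r0 + s)) = 0 := by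
          linear_combination h - hr0 + (r0 ^ 2 + r0 * s - a * r0 - a * s) * c2
        rcases mul_eq_zero.mp hz with h | h
        · exact Or.inl (sub_eq_zero.mp h)
        · exact Or.inr (sub_eq_zero.mp h)
      · rintro (rfl | rfl)
        · exact hr0
        · linear_combination hr0 + (r0 * s + s ^ 2) * c2
    have hroot_mem : ∀ a : F, a ^ 2 + s * a + 1 = 0 → (a ∈ D ∧ a + a⁻¹ = s) := by
      intro a ha
      have ha0 : a ≠ 0 := by
        rintro rfl
        simp at ha
      have ha1 : a ≠ 1 := by
        rintro rfl
        apply hs0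
        linear_combination ha - c2
      refine ⟨by rw [hD, Finset.mem_filter]; exact ⟨Finset.mem_univ _, ha0, ha1⟩, ?_⟩
      have hainv : a⁻¹ = s + a := inv_eq_of_mul_eq_one_right (by linear_combination ha - c2)
      rw [hainv]
      linear_combination a * c2
    have hset : (D.filter fun l => l + l⁻¹ = s) = {r0, r0 + s} := by
      ext l
      rw [Finset.mem_filter, hD, Finset.mem_filter]
      constructor
      · rintro ⟨⟨-, hl0, hl1⟩, hls⟩
        rw [Finset.mem_insert, Finset.mem_singleton, ← key]
        have hinv : l * l⁻¹ = 1 := mul_inv_cancel₀ hl0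
        linear_combination l * hls - hinv + s * l * c2
      · intro hl
        rw [Finset.mem_insert, Finset.mem_singleton, ← key] at hl
        obtain ⟨hm, hv⟩ := hroot_mem l hl
        rw [hD, Finset.mem_filter] at hm
        exact ⟨⟨Finset.mem_univ _, hm.2⟩, hv⟩
    rw [hset]
    rw [Finset.card_insert_of_notMem (by
      simp only [Finset.mem_singleton]
      intro h
      exact hs0 (left_eq_add.mp h)), Finset.card_singleton]
  have hcount := Finset.card_eq_sum_card_fiberwise hmap
  rw [Finset.sum_congr rfl hfib, Finset.sum_const, smul_eq_mul] at hcount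
  have hDcard : D.card = q - 2 := by
    have : D = (Finset.univ.erase 1).erase 0 := by
      ext l
      rw [hD, Finset.mem_filter, Finset.mem_erase, Finset.mem_erase]
      simp [and_comm, and_assoc]
    rw [this, Finset.card_erase_of_mem (by
        rw [Finset.mem_erase]; exact ⟨zero_ne_one, Finset.mem_univ _⟩),
      Finset.card_erase_of_mem (Finset.mem_univ _), Finset.card_univ]
    omega
  omega


theorem splitS_partition :
    (splitS F).card + (Finset.univ.filter fun t : F => ¬∃ a : F, a ^ 2 + t * a + 1 = 0).card + 1
      = q := by
  classical
  have h1 : (Finset.univ.filter fun t : F => ∃ a : F, a ^ 2 + t * a + 1 = 0)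
      = insert (0 : F) (splitS F) := by
    ext t
    rw [Finset.mem_filter, Finset.mem_insert, splitS, Finset.mem_filter]
    constructor
    · rintro ⟨-, h⟩
      by_cases ht : t = 0
      · exact Or.inl ht
      · exact Or.inr ⟨Finset.mem_univ _, ht, h⟩
    · rintro (rfl | ⟨-, -, h⟩)
      · exact ⟨Finset.mem_univ _, zero_has_root⟩
      · exact ⟨Finset.mem_univ _, h⟩
  have h2 : (0 : F) ∉ splitS F := by
    rw [splitS, Finset.mem_filter]
    rintro ⟨-, h, -⟩
    exact h rfl
  have h3 := Finset.card_filter_add_card_filter_not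
    (s := (Finset.univ : Finset F)) (p := fun t : F => ∃ a : F, a ^ 2 + t * a + 1 = 0)
  rw [Finset.card_univ, h1, Finset.card_insert_of_notMem h2] at h3
  omega

end SL2sec4

theorem card_subtype_and_ne {α : Type*} [Fintype α] (P : α → Prop) (a : α) (ha : P a) :
    Nat.card {x : α // P x ∧ x ≠ a} + 1 = Nat.card {x : α // P x} := by
  classical
  rw [Nat.card_eq_fintype_card, Nat.card_eq_fintype_card, Fintype.card_subtype,
    Fintype.card_subtype]
  have hset : (Finset.univ.filter fun x => P x ∧ x ≠ a)
      = (Finset.univ.filter fun x => P x).erase a := by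
    ext x
    simp [Finset.mem_erase, and_comm]
  rw [hset, Finset.card_erase_of_mem (Finset.mem_filter.mpr ⟨Finset.mem_univ _, ha⟩)]
  have hpos : 0 < (Finset.univ.filter fun x => P x).card :=
    Finset.card_pos.mpr ⟨a, Finset.mem_filter.mpr ⟨Finset.mem_univ _, ha⟩⟩
  have hee : (Finset.univ.filter fun x => P x).card = (Finset.univ.filter P).card := rfl
  omega

section SL2sec5
variable {F : Type*} [Field F] [Fintype F] [DecidableEq F] [CharP F 2]

local notation "SL2" => Matrix.SpecialLinearGroup (Fin 2) F
local notation "M2" => Matrix (Fin 2) (Fin 2) F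
local notation "q" => Fintype.card F

theorem sl_comm_iff (a b : SL2) : a * b = b * a ↔ (a : M2) * (b : M2) = (b : M2) * (a : M2) := by
  rw [← Matrix.SpecialLinearGroup.coe_mul, ← Matrix.SpecialLinearGroup.coe_mul]
  exact Subtype.val_injective.eq_iff.symm

theorem vsl_ne_one (x : {x : SL2 // x ∉ Subgroup.center SL2}) : x.val ≠ 1 :=
  fun h => x.prop (h ▸ Subgroup.one_mem _)

theorem ne_one_not_center (g : SL2) (h : g ≠ 1) : g ∉ Subgroup.center SL2 := by
  rw [center_SL2_eq_bot, Subgroup.mem_bot]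
  exact h

def slSetoid (F : Type*) [Field F] [Fintype F] [DecidableEq F] [CharP F 2] :
    Setoid {x : SL2 // x ∉ Subgroup.center SL2} where
  r x y := (x : SL2) * y = y * x
  iseqv := by
    constructor
    · intro x; rfl
    · intro x y h; exact h.symm
    · intro x y z hxy hyz
      rw [sl_comm_iff] at hxy hyz ⊢
      exact cent_comm y.val (vsl_ne_one y) _ _ hxy hyz.symm

theorem clsCard_add_one (x : {x : SL2 // x ∉ Subgroup.center SL2}) :
    clsCard (slSetoid F) x + 1 =
      Nat.card {p : F × F //
        p.1 ^ 2 + ((x.val : M2)).trace * p.1 * p.2 + p.2 ^ 2 = 1} := by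
  classical
  set g : SL2 := x.val with hgdef
  have hg : g ≠ 1 := vsl_ne_one x
  have E1 : {y : {x : SL2 // x ∉ Subgroup.center SL2} // (x : SL2) * ↑y = ↑y * ↑x} ≃
      {h : SL2 // h ∉ Subgroup.center SL2 ∧ g * h = h * g} :=
    Equiv.subtypeSubtypeEquivSubtypeInter (fun h : SL2 => h ∉ Subgroup.center SL2)
      (fun h : SL2 => g * h = h * g)
  have E2 : {h : SL2 // h ∉ Subgroup.center SL2 ∧ g * h = h * g} ≃
      {h : SL2 // (h : M2) * (g : M2) = (g : M2) * (h : M2) ∧ h ≠ 1} := by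
    refine Equiv.subtypeEquivRight fun h => ?_
    constructor
    · rintro ⟨hc, hcom⟩
      exact ⟨((sl_comm_iff g h).mp hcom).symm, fun h1 => hc (h1 ▸ Subgroup.one_mem _)⟩
    · rintro ⟨hm, h1⟩
      exact ⟨ne_one_not_center h h1, (sl_comm_iff g h).mpr hm.symm⟩
  have E3 : {h : SL2 // (h : M2) * (g : M2) = (g : M2) * (h : M2) ∧ h ≠ 1} ≃
      {z : {h : SL2 // (h : M2) * (g : M2) = (g : M2) * (h : M2)} // z.val ≠ 1} :=
    (Equiv.subtypeSubtypeEquivSubtypeInter _ _).symm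
  have E4 : {z : {h : SL2 // (h : M2) * (g : M2) = (g : M2) * (h : M2)} // z.val ≠ 1} ≃
      {p : {p : F × F // p.1 ^ 2 + ((g : M2)).trace * p.1 * p.2 + p.2 ^ 2 = 1} //
        p.val ≠ (1, 0)} :=
    (Equiv.subtypeEquiv (centEquiv g hg) fun p =>
      (not_congr (centEquiv_one g hg p)).symm).symm
  have E5 : {p : {p : F × F // p.1 ^ 2 + ((g : M2)).trace * p.1 * p.2 + p.2 ^ 2 = 1} //
        p.val ≠ (1, 0)} ≃
      {p : F × F // (p.1 ^ 2 + ((g : M2)).trace * p.1 * p.2 + p.2 ^ 2 = 1) ∧ p ≠ (1, 0)} :=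
    Equiv.subtypeSubtypeEquivSubtypeInter
      (fun p : F × F => p.1 ^ 2 + ((g : M2)).trace * p.1 * p.2 + p.2 ^ 2 = 1)
      (fun p : F × F => p ≠ (1, 0))
  have hrfl : clsCard (slSetoid F) x
      = Nat.card {y : {x : SL2 // x ∉ Subgroup.center SL2} // (x : SL2) * ↑y = ↑y * ↑x} := rfl
  rw [hrfl, Nat.card_congr (((E1.trans E2).trans E3).trans (E4.trans E5))]
  exact card_subtype_and_ne _ (1, 0) (by norm_num)

theorem clsCard_trichotomy (hq : 2 ≤ q) (x : {x : SL2 // x ∉ Subgroup.center SL2}) :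
    (((x.val : M2)).trace = 0 ∧ clsCard (slSetoid F) x = q - 1)
    ∨ ((((x.val : M2)).trace ≠ 0 ∧ (∃ a : F, a ^ 2 + ((x.val : M2)).trace * a + 1 = 0))
        ∧ clsCard (slSetoid F) x = q - 2)
    ∨ ((¬∃ a : F, a ^ 2 + ((x.val : M2)).trace * a + 1 = 0)
        ∧ clsCard (slSetoid F) x = q) := by
  classical
  have hM := clsCard_add_one x
  have hZM := M_card_eq (F := F) (((x.val : M2)).trace)
  rw [Z_card_eq] at hZM
  set t : F := ((x.val : M2)).trace with htdef
  by_cases ht : t = 0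
  · rw [ht] at hM hZM
    rw [rcount_zero] at hZM
    refine Or.inl ⟨ht, ?_⟩
    have hid : 1 + (q - 1) * 1 + (q - 1) * q = q ^ 2 := by
      zify [show (1 : ℕ) ≤ q by omega]
      ring
    have hMval : (q - 1) * Nat.card {p : F × F //
        p.1 ^ 2 + (0 : F) * p.1 * p.2 + p.2 ^ 2 = 1} = (q - 1) * q := by linarith
    have hMq := Nat.eq_of_mul_eq_mul_left (show 0 < q - 1 by omega) hMval
    omega
  · by_cases hroot : ∃ a : F, a ^ 2 + t * a + 1 = 0
    · obtain ⟨a, ha⟩ := hroot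
      refine Or.inr (Or.inl ⟨⟨ht, a, ha⟩, ?_⟩)
      rw [rcount_root ht ha] at hZM
      have hid : 1 + (q - 1) * 2 + (q - 1) * (q - 1) = q ^ 2 := by
        zify [show (1 : ℕ) ≤ q by omega]
        ring
      have hMval : (q - 1) * Nat.card {p : F × F //
          p.1 ^ 2 + t * p.1 * p.2 + p.2 ^ 2 = 1} = (q - 1) * (q - 1) := by linarith
      have hMq := Nat.eq_of_mul_eq_mul_left (show 0 < q - 1 by omega) hMval
      omega
    · refine Or.inr (Or.inr ⟨hroot, ?_⟩)
      rw [rcount_no_root hroot] at hZM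
      have hid : 1 + (q - 1) * 0 + (q - 1) * (q + 1) = q ^ 2 := by
        zify [show (1 : ℕ) ≤ q by omega]
        ring
      have hMval : (q - 1) * Nat.card {p : F × F //
          p.1 ^ 2 + t * p.1 * p.2 + p.2 ^ 2 = 1} = (q - 1) * (q + 1) := by linarith
      have hMq := Nat.eq_of_mul_eq_mul_left (show 0 < q - 1 by omega) hMval
      omega

end SL2sec5

section SL2sec6
variable {F : Type*} [Field F] [Fintype F] [DecidableEq F] [CharP F 2]

local notation "SL2" => Matrix.SpecialLinearGroup (Fin 2) F
local notation "M2" => Matrix (Fin 2) (Fin 2) F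
local notation "q" => Fintype.card F
local notation "Vsl" => {x : SL2 // x ∉ Subgroup.center SL2}

theorem cnt_zero_trace (hq4 : 4 ≤ q) :
    Nat.card {x : Vsl // clsCard (slSetoid F) x = q - 1} + 1 = q * (q - 1) + q := by
  classical
  have E1 : {x : Vsl // clsCard (slSetoid F) x = q - 1} ≃
      {x : Vsl // ((x.val : M2)).trace = 0} := by
    refine Equiv.subtypeEquivRight fun x => ?_
    constructor
    · intro h
      rcases clsCard_trichotomy (by omega) x with ⟨h1, h2⟩ | ⟨h1, h2⟩ | ⟨h1, h2⟩
      · exact h1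
      · omega
      · omega
    · intro h
      rcases clsCard_trichotomy (by omega) x with ⟨h1, h2⟩ | ⟨h1, h2⟩ | ⟨h1, h2⟩
      · exact h2
      · exact absurd h h1.1
      · exact absurd (show ∃ a : F, a ^ 2 + ((x.val : M2)).trace * a + 1 = 0 by rw [h]; exact zero_has_root) h1
  have E2 : {x : Vsl // ((x.val : M2)).trace = 0} ≃
      {g : SL2 // ((g : M2)).trace = 0 ∧ g ≠ 1} :=
    (Equiv.subtypeSubtypeEquivSubtypeInter (fun g : SL2 => g ∉ Subgroup.center SL2)
      (fun g : SL2 => ((g : M2)).trace = 0)).trans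
      (Equiv.subtypeEquivRight fun g => by
        constructor
        · rintro ⟨hc, ht⟩
          exact ⟨ht, fun h1 => hc (h1 ▸ Subgroup.one_mem _)⟩
        · rintro ⟨ht, h1⟩
          exact ⟨ne_one_not_center g h1, ht⟩)
  rw [Nat.card_congr (E1.trans E2),
    card_subtype_and_ne (fun g : SL2 => ((g : M2)).trace = 0) 1 trace_matrix_one,
    N_card_eq, rcount_zero, one_mul]

theorem cnt_split (hq4 : 4 ≤ q) :
    Nat.card {x : Vsl // clsCard (slSetoid F) x = q - 2}
      = (splitS F).card * (q * (q - 1) + 2 * q) := by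
  classical
  have E1 : {x : Vsl // clsCard (slSetoid F) x = q - 2} ≃
      {x : Vsl // ((x.val : M2)).trace ≠ 0
        ∧ ∃ a : F, a ^ 2 + ((x.val : M2)).trace * a + 1 = 0} := by
    refine Equiv.subtypeEquivRight fun x => ?_
    constructor
    · intro h
      rcases clsCard_trichotomy (by omega) x with ⟨h1, h2⟩ | ⟨h1, h2⟩ | ⟨h1, h2⟩
      · omega
      · exact h1
      · omega
    · intro h
      rcases clsCard_trichotomy (by omega) x with ⟨h1, h2⟩ | ⟨h1, h2⟩ | ⟨h1, h2⟩
      · exact absurd h1 h.1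
      · exact h2
      · exact absurd h.2 h1
  have E2 : {x : Vsl // ((x.val : M2)).trace ≠ 0
        ∧ ∃ a : F, a ^ 2 + ((x.val : M2)).trace * a + 1 = 0} ≃
      {g : SL2 // ((g : M2)).trace ≠ 0 ∧ ∃ a : F, a ^ 2 + ((g : M2)).trace * a + 1 = 0} :=
    (Equiv.subtypeSubtypeEquivSubtypeInter (fun g : SL2 => g ∉ Subgroup.center SL2)
      (fun g : SL2 => ((g : M2)).trace ≠ 0
        ∧ ∃ a : F, a ^ 2 + ((g : M2)).trace * a + 1 = 0)).trans
      (Equiv.subtypeEquivRight fun g => by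
        constructor
        · rintro ⟨-, h⟩
          exact h
        · intro h
          refine ⟨ne_one_not_center g fun h1 => h.1 ?_, h⟩
          rw [h1]
          exact trace_matrix_one)
  have E3 : {g : SL2 // ((g : M2)).trace ≠ 0 ∧ ∃ a : F, a ^ 2 + ((g : M2)).trace * a + 1 = 0} ≃
      Σ t : {t : F // t ≠ 0 ∧ ∃ a : F, a ^ 2 + t * a + 1 = 0},
        {g : SL2 // ((g : M2)).trace = t.val} :=
    subtypeFiberSigma (fun g : SL2 => ((g : M2)).trace)
      (fun t : F => t ≠ 0 ∧ ∃ a : F, a ^ 2 + t * a + 1 = 0)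
  rw [Nat.card_congr ((E1.trans E2).trans E3), nat_card_sigma]
  have hval : ∀ t : {t : F // t ≠ 0 ∧ ∃ a : F, a ^ 2 + t * a + 1 = 0},
      Nat.card {g : SL2 // ((g : M2)).trace = t.val} = q * (q - 1) + 2 * q := by
    intro t
    obtain ⟨a, ha⟩ := t.property.2
    rw [N_card_eq, rcount_root t.property.1 ha]
  rw [Finset.sum_congr rfl fun t _ => hval t, Finset.sum_const, smul_eq_mul, Finset.card_univ]
  congr 1
  rw [Fintype.card_subtype]
  rfl

theorem cnt_irr (hq4 : 4 ≤ q) :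
    Nat.card {x : Vsl // clsCard (slSetoid F) x = q}
      = (Finset.univ.filter fun t : F => ¬∃ a : F, a ^ 2 + t * a + 1 = 0).card
        * (q * (q - 1)) := by
  classical
  have E1 : {x : Vsl // clsCard (slSetoid F) x = q} ≃
      {x : Vsl // ¬∃ a : F, a ^ 2 + ((x.val : M2)).trace * a + 1 = 0} := by
    refine Equiv.subtypeEquivRight fun x => ?_
    constructor
    · intro h
      rcases clsCard_trichotomy (by omega) x with ⟨h1, h2⟩ | ⟨h1, h2⟩ | ⟨h1, h2⟩
      · omega
      · omega
      · exact h1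
    · intro h
      rcases clsCard_trichotomy (by omega) x with ⟨h1, h2⟩ | ⟨h1, h2⟩ | ⟨h1, h2⟩
      · exact absurd (show ∃ a : F, a ^ 2 + ((x.val : M2)).trace * a + 1 = 0 by rw [h1]; exact zero_has_root) h
      · exact absurd h1.2 h
      · exact h2
  have E2 : {x : Vsl // ¬∃ a : F, a ^ 2 + ((x.val : M2)).trace * a + 1 = 0} ≃
      {g : SL2 // ¬∃ a : F, a ^ 2 + ((g : M2)).trace * a + 1 = 0} :=
    (Equiv.subtypeSubtypeEquivSubtypeInter (fun g : SL2 => g ∉ Subgroup.center SL2)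
      (fun g : SL2 => ¬∃ a : F, a ^ 2 + ((g : M2)).trace * a + 1 = 0)).trans
      (Equiv.subtypeEquivRight fun g => by
        constructor
        · rintro ⟨-, h⟩
          exact h
        · intro h
          refine ⟨ne_one_not_center g fun h1 => h ?_, h⟩
          rw [h1, trace_matrix_one]
          exact zero_has_root)
  have E3 : {g : SL2 // ¬∃ a : F, a ^ 2 + ((g : M2)).trace * a + 1 = 0} ≃
      Σ t : {t : F // ¬∃ a : F, a ^ 2 + t * a + 1 = 0},
        {g : SL2 // ((g : M2)).trace = t.val} :=
    subtypeFiberSigma (fun g : SL2 => ((g : M2)).trace)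
      (fun t : F => ¬∃ a : F, a ^ 2 + t * a + 1 = 0)
  rw [Nat.card_congr ((E1.trans E2).trans E3), nat_card_sigma]
  have hval : ∀ t : {t : F // ¬∃ a : F, a ^ 2 + t * a + 1 = 0},
      Nat.card {g : SL2 // ((g : M2)).trace = t.val} = q * (q - 1) := by
    intro t
    rw [N_card_eq, rcount_no_root t.property, zero_mul, add_zero]
  rw [Finset.sum_congr rfl fun t _ => hval t, Finset.sum_const, smul_eq_mul, Finset.card_univ]
  congr 1
  rw [Fintype.card_subtype]

theorem cnt_other (hq4 : 4 ≤ q) (n : ℕ) (h1 : n ≠ q - 1) (h2 : n ≠ q - 2) (h3 : n ≠ q) :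
    Nat.card {x : Vsl // clsCard (slSetoid F) x = n} = 0 := by
  haveI : IsEmpty {x : Vsl // clsCard (slSetoid F) x = n} := by
    refine ⟨fun x => ?_⟩
    rcases clsCard_trichotomy (by omega) x.val with ⟨-, h⟩ | ⟨-, h⟩ | ⟨-, h⟩
    · exact h1 (x.property.symm.trans h)
    · exact h2 (x.property.symm.trans h)
    · exact h3 (x.property.symm.trans h)
  exact Nat.card_of_isEmpty

end SL2sec6


set_option maxHeartbeats 1000000 in
/-- For `k ≥ 2`, the commuting graph of `PSL(2, 2^k)` is isomorphic to
`(2^k+1)·K_{2^k-1} ⊔ 2^{k-1}(2^k+1)·K_{2^k-2} ⊔ 2^{k-1}(2^k-1)·K_{2^k}`. -/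
theorem commGraph_PSL_two
    (k : ℕ) (hk : 2 ≤ k) (F : Type*) [Field F] [Fintype F] [DecidableEq F]
    (hF : Fintype.card F = 2 ^ k) :
    Nonempty (commGraph
        (Matrix.SpecialLinearGroup (Fin 2) F ⧸
          Subgroup.center (Matrix.SpecialLinearGroup (Fin 2) F)) ≃g
      (completeUnion (2 ^ k + 1) (2 ^ k - 1)
        ⊕g completeUnion (2 ^ (k - 1) * (2 ^ k + 1)) (2 ^ k - 2)
        ⊕g completeUnion (2 ^ (k - 1) * (2 ^ k - 1)) (2 ^ k))) := by
  classical
  haveI : CharP F 2 := charP_two_of_card (by omega) hF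
  have hq4 : 4 ≤ Fintype.card F := by
    rw [hF]
    calc (4 : ℕ) = 2 ^ 2 := rfl
    _ ≤ 2 ^ k := Nat.pow_le_pow_right (by norm_num) hk
  have h2k : 2 * 2 ^ (k - 1) = 2 ^ k := by
    rw [← pow_succ']
    congr 1
    omega
  rw [← hF] at h2k
  -- the group isomorphism with SL(2, F)
  let e : (Matrix.SpecialLinearGroup (Fin 2) F ⧸
      Subgroup.center (Matrix.SpecialLinearGroup (Fin 2) F)) ≃* Matrix.SpecialLinearGroup (Fin 2) F :=
    (QuotientGroup.quotientMulEquivOfEq center_SL2_eq_bot).trans QuotientGroup.quotientBot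
  -- counting the commuting classes
  have key : ∀ n : ℕ,
      Nat.card {x : {x : Matrix.SpecialLinearGroup (Fin 2) F //
          x ∉ Subgroup.center (Matrix.SpecialLinearGroup (Fin 2) F)} //
        clsCard (slSetoid F) x = n}
      = Nat.card {w : CUnionT (2 ^ k + 1) (2 ^ (k - 1) * (2 ^ k + 1))
            (2 ^ (k - 1) * (2 ^ k - 1)) (2 ^ k - 1) (2 ^ k - 2) (2 ^ k) //
          clsCard (rhsSetoid (2 ^ k + 1) (2 ^ (k - 1) * (2 ^ k + 1))
            (2 ^ (k - 1) * (2 ^ k - 1)) (2 ^ k - 1) (2 ^ k - 2) (2 ^ k)) w = n} := by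
    intro n
    rw [rhs_count, ← hF]
    set q : ℕ := Fintype.card F with hqdef
    by_cases hn1 : n = q - 1
    · rw [if_pos (by omega), if_neg (by omega), if_neg (by omega), hn1]
      simp only [add_zero]
      have hcnt := cnt_zero_trace (F := F) hq4
      have hid : (q + 1) * (q - 1) + 1 = q * (q - 1) + q := by
        zify [show 1 ≤ q by omega]
        ring
      linarith
    · by_cases hn2 : n = q - 2
      · rw [if_neg (by omega), if_pos (by omega), if_neg (by omega), hn2]
        simp only [add_zero, zero_add]
        rw [cnt_split (F := F) hq4]
        have hS := two_mul_splitS_card (F := F)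
        refine Nat.eq_of_mul_eq_mul_left (show 0 < 2 by norm_num) ?_
        calc 2 * ((splitS F).card * (q * (q - 1) + 2 * q))
            = (2 * (splitS F).card) * (q * (q - 1) + 2 * q) := by ring
          _ = (q - 2) * (q * (q - 1) + 2 * q) := by rw [hS]
          _ = q * ((q + 1) * (q - 2)) := by
              zify [show 1 ≤ q by omega, show 2 ≤ q by omega]
              ring
          _ = (2 * 2 ^ (k - 1)) * ((q + 1) * (q - 2)) := by rw [h2k]
          _ = 2 * (2 ^ (k - 1) * (q + 1) * (q - 2)) := by ring
      · by_cases hn3 : n = q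
        · rw [if_neg (by omega), if_neg (by omega), if_pos (by omega), hn3]
          simp only [zero_add]
          rw [cnt_irr (F := F) hq4]
          have hS := two_mul_splitS_card (F := F)
          have hpart := splitS_partition (F := F)
          have hR : 2 * (Finset.univ.filter fun t : F =>
              ¬∃ a : F, a ^ 2 + t * a + 1 = 0).card = q := by omega
          refine Nat.eq_of_mul_eq_mul_left (show 0 < 2 by norm_num) ?_
          calc 2 * ((Finset.univ.filter fun t : F =>
                ¬∃ a : F, a ^ 2 + t * a + 1 = 0).card * (q * (q - 1)))
              = (2 * (Finset.univ.filter fun t : F =>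
                ¬∃ a : F, a ^ 2 + t * a + 1 = 0).card) * (q * (q - 1)) := by ring
            _ = q * (q * (q - 1)) := by rw [hR]
            _ = (2 * 2 ^ (k - 1)) * ((q - 1) * q) := by rw [h2k]; ring
            _ = 2 * (2 ^ (k - 1) * (q - 1) * q) := by ring
        · rw [if_neg (by omega), if_neg (by omega), if_neg (by omega)]
          simp only [add_zero]
          exact cnt_other (F := F) hq4 n hn1 hn2 hn3
  obtain ⟨e4⟩ := eqGraph_iso_of_counts (slSetoid F)
    (rhsSetoid (2 ^ k + 1) (2 ^ (k - 1) * (2 ^ k + 1)) (2 ^ (k - 1) * (2 ^ k - 1))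
      (2 ^ k - 1) (2 ^ k - 2) (2 ^ k)) key
  have iso2 : commGraph (Matrix.SpecialLinearGroup (Fin 2) F) ≃g eqGraph (slSetoid F) :=
    ⟨Equiv.refl _, fun {a b} => Iff.rfl⟩
  exact ⟨((commGraphIsoOfMulEquiv e).trans iso2).trans (e4.trans rhsIso)⟩
end

section
/- For a prime power q = p^n > 2, the commuting graph of GL(2, q) is isomorphic to (q(q+1)/2)·K_{q^2 - 3q + 2} ⊔ (q(q-1)/2)·K_{q^2 - q} ⊔ (q+1)·K_{q^2 - 2q + 1}. -/
open Polynomial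

open Matrix

set_option linter.unusedSectionVars false
set_option maxHeartbeats 1600000
set_option synthInstance.maxHeartbeats 400000

namespace CommGL

variable {F : Type*} [Field F] [Fintype F] [DecidableEq F]

def IsScalar (M : Matrix (Fin 2) (Fin 2) F) : Prop := ∃ c : F, M = c • (1 : Matrix (Fin 2) (Fin 2) F)

lemma commutant {M A : Matrix (Fin 2) (Fin 2) F} (hM : ¬ IsScalar M)
    (h : A * M = M * A) : ∃ a b : F, A = a • 1 + b • M := by
  have h00 := congrFun (congrFun h 0) 0
  have h01 := congrFun (congrFun h 0) 1
  have h10 := congrFun (congrFun h 1) 0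
  have h11 := congrFun (congrFun h 1) 1
  simp only [Matrix.mul_apply, Fin.sum_univ_two] at h00 h01 h10 h11
  by_cases hβ : M 0 1 ≠ 0
  · refine ⟨A 0 0 - (A 0 1 / M 0 1) * M 0 0, A 0 1 / M 0 1, ?_⟩
    ext i j
    fin_cases i <;> fin_cases j <;>
      simp only [Fin.zero_eta, Fin.mk_one, Fin.isValue, Matrix.add_apply, Matrix.smul_apply, Matrix.one_apply, smul_eq_mul, one_ne_zero, zero_ne_one, ↓reduceIte, mul_one, mul_zero, add_zero] <;>
      field_simp
    · ring
    · ring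
    · linear_combination -h00
    · linear_combination -h01
  push_neg at hβ
  by_cases hγ : M 1 0 ≠ 0
  · refine ⟨A 0 0 - (A 1 0 / M 1 0) * M 0 0, A 1 0 / M 1 0, ?_⟩
    ext i j
    fin_cases i <;> fin_cases j <;>
      simp only [Fin.zero_eta, Fin.mk_one, Fin.isValue, Matrix.add_apply, Matrix.smul_apply, Matrix.one_apply, smul_eq_mul, one_ne_zero, zero_ne_one, ↓reduceIte, mul_one, mul_zero, add_zero] <;>
      field_simp
    · ring
    · linear_combination h00
    · ring
    · linear_combination h10
  push_neg at hγ
  have hαδ : M 0 0 ≠ M 1 1 := by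
    intro he
    exact hM ⟨M 0 0, by ext i j; fin_cases i <;> fin_cases j <;>
      simp [Matrix.one_apply, hβ, hγ, he]⟩
  have hsub : M 0 0 - M 1 1 ≠ 0 := sub_ne_zero.2 hαδ
  have hr : A 0 1 = 0 := by
    have h2 : A 0 1 * (M 1 1 - M 0 0) = 0 := by
      linear_combination h01 - (A 0 0 - A 1 1) * hβ
    rcases mul_eq_zero.1 h2 with h3 | h3
    · exact h3
    · exact absurd (sub_eq_zero.1 h3).symm hαδ
  have hs : A 1 0 = 0 := by
    have h2 : A 1 0 * (M 0 0 - M 1 1) = 0 := by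
      linear_combination h10 - (A 1 1 - A 0 0) * hγ
    rcases mul_eq_zero.1 h2 with h3 | h3
    · exact h3
    · exact absurd (sub_eq_zero.1 h3) hαδ
  refine ⟨A 0 0 - ((A 0 0 - A 1 1) / (M 0 0 - M 1 1)) * M 0 0,
    (A 0 0 - A 1 1) / (M 0 0 - M 1 1), ?_⟩
  ext i j
  fin_cases i <;> fin_cases j <;>
    simp only [Fin.zero_eta, Fin.mk_one, Fin.isValue, Matrix.add_apply, Matrix.smul_apply, Matrix.one_apply, smul_eq_mul, one_ne_zero, zero_ne_one, ↓reduceIte, mul_one, mul_zero, add_zero] <;>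
    field_simp
  · ring
  · rw [hr, hβ]; ring
  · rw [hs, hγ]; ring
  · ring


lemma coeff_unique {M : Matrix (Fin 2) (Fin 2) F} (hM : ¬ IsScalar M) {a b c d : F}
    (h : a • 1 + b • M = c • (1 : Matrix (Fin 2) (Fin 2) F) + d • M) : a = c ∧ b = d := by
  by_cases hbd : b = d
  · subst hbd
    have := congrFun (congrFun h 0) 0
    simp [Matrix.add_apply, Matrix.smul_apply, Matrix.one_apply] at this
    exact ⟨this, rfl⟩
  · exfalso
    apply hM
    have hdb : d - b ≠ 0 := sub_ne_zero.2 (Ne.symm hbd)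
    have h2 : (d - b) • M = (a - c) • (1 : Matrix (Fin 2) (Fin 2) F) := by
      ext i j
      have := congrFun (congrFun h i) j
      simp only [Matrix.add_apply, Matrix.smul_apply, Matrix.one_apply, smul_eq_mul] at this ⊢
      linear_combination -this
    refine ⟨(d - b)⁻¹ * (a - c), ?_⟩
    calc M = (d - b)⁻¹ • ((d - b) • M) := (inv_smul_smul₀ hdb M).symm
    _ = (d - b)⁻¹ • ((a - c) • (1 : Matrix (Fin 2) (Fin 2) F)) := by rw [h2]
    _ = ((d - b)⁻¹ * (a - c)) • 1 := smul_smul _ _ _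

lemma nonscalar_comb {M : Matrix (Fin 2) (Fin 2) F} (hM : ¬ IsScalar M) {a b : F} (hb : b ≠ 0) :
    ¬ IsScalar (a • 1 + b • M) := by
  rintro ⟨c, hc⟩
  have : a • (1 : Matrix (Fin 2) (Fin 2) F) + b • M = c • 1 + (0:F) • M := by
    rw [hc]; simp
  exact hb (coeff_unique hM this).2

lemma abelian {M A B : Matrix (Fin 2) (Fin 2) F} (hM : ¬ IsScalar M)
    (hA : A * M = M * A) (hB : B * M = M * B) : A * B = B * A := by
  obtain ⟨a, b, rfl⟩ := commutant hM hA
  obtain ⟨c, d, rfl⟩ := commutant hM hB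
  have h1 : Commute (a • (1 : Matrix (Fin 2) (Fin 2) F) + b • M) M :=
    ((Commute.one_left M).smul_left a).add_left ((Commute.refl M).smul_left b)
  exact (((Commute.one_right _).smul_right c).add_right (h1.smul_right d)).eq

lemma det_comb (M : Matrix (Fin 2) (Fin 2) F) (a b : F) :
    det (a • 1 + b • M) = a^2 + a * b * Matrix.trace M + b^2 * det M := by
  simp [Matrix.det_fin_two, Matrix.trace_fin_two, Matrix.add_apply, Matrix.smul_apply,
    Matrix.one_apply]
  ring

lemma trace_comb (M : Matrix (Fin 2) (Fin 2) F) (a b : F) :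
    Matrix.trace (a • 1 + b • M) = 2 * a + b * Matrix.trace M := by
  simp [Matrix.trace_fin_two, Matrix.add_apply, Matrix.smul_apply, Matrix.one_apply]
  ring

lemma det_sub_smul (M : Matrix (Fin 2) (Fin 2) F) (t : F) :
    det (M - t • 1) = t * t - Matrix.trace M * t + det M := by
  simp [Matrix.det_fin_two, Matrix.trace_fin_two, Matrix.sub_apply, Matrix.smul_apply,
    Matrix.one_apply]
  ring

def Umat : GL (Fin 2) F :=
  ⟨!![1, 1; 0, 1], !![1, -1; 0, 1],
   by ext i j; fin_cases i <;> fin_cases j <;> simp [Matrix.mul_apply, Fin.sum_univ_two],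
   by ext i j; fin_cases i <;> fin_cases j <;> simp [Matrix.mul_apply, Fin.sum_univ_two]⟩

def Lmat : GL (Fin 2) F :=
  ⟨!![1, 0; 1, 1], !![1, 0; -1, 1],
   by ext i j; fin_cases i <;> fin_cases j <;> simp [Matrix.mul_apply, Fin.sum_univ_two],
   by ext i j; fin_cases i <;> fin_cases j <;> simp [Matrix.mul_apply, Fin.sum_univ_two]⟩

lemma mem_center_iff (x : GL (Fin 2) F) :
    x ∈ Subgroup.center (GL (Fin 2) F) ↔ IsScalar (x.val) := by
  rw [Subgroup.mem_center_iff]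
  constructor
  · intro hc
    by_contra hns
    have hUs : ¬ IsScalar ((Umat : GL (Fin 2) F).val) := by
      rintro ⟨c, hc2⟩
      have h0 := congrFun (congrFun hc2 0) 1
      simp [Umat, Matrix.smul_apply, Matrix.one_apply] at h0
    have hLs : ¬ IsScalar ((Lmat : GL (Fin 2) F).val) := by
      rintro ⟨c, hc2⟩
      have h0 := congrFun (congrFun hc2 1) 0
      simp [Lmat, Matrix.smul_apply, Matrix.one_apply] at h0
    have hcU : x.val * (Umat : GL (Fin 2) F).val = (Umat : GL (Fin 2) F).val * x.val := by
      have := congrArg Units.val (hc Umat)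
      simpa [Units.val_mul] using this.symm
    have hcL : x.val * (Lmat : GL (Fin 2) F).val = (Lmat : GL (Fin 2) F).val * x.val := by
      have := congrArg Units.val (hc Lmat)
      simpa [Units.val_mul] using this.symm
    obtain ⟨a, b, hab⟩ := commutant hUs hcU
    obtain ⟨a', b', hab'⟩ := commutant hLs hcL
    apply hns
    have e01 : x.val 0 1 = b := by
      have h3 := congrFun (congrFun hab 0) 1
      simpa [Umat, Matrix.add_apply, Matrix.smul_apply, Matrix.one_apply] using h3
    have e01' : x.val 0 1 = 0 := by
      have h3 := congrFun (congrFun hab' 0) 1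
      simpa [Lmat, Matrix.add_apply, Matrix.smul_apply, Matrix.one_apply] using h3
    have e10 : x.val 1 0 = 0 := by
      have h3 := congrFun (congrFun hab 1) 0
      simpa [Umat, Matrix.add_apply, Matrix.smul_apply, Matrix.one_apply] using h3
    have hb0 : b = 0 := by rw [← e01, e01']
    have e00 : x.val 0 0 = a := by
      have h3 := congrFun (congrFun hab 0) 0
      rw [hb0] at h3
      simpa [Umat, Matrix.add_apply, Matrix.smul_apply, Matrix.one_apply] using h3
    have e11 : x.val 1 1 = a := by
      have h3 := congrFun (congrFun hab 1) 1
      rw [hb0] at h3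
      simpa [Umat, Matrix.add_apply, Matrix.smul_apply, Matrix.one_apply] using h3
    refine ⟨a, ?_⟩
    ext i j
    fin_cases i <;> fin_cases j <;>
      simp [Matrix.smul_apply, Matrix.one_apply, e00, e11, e01', e10]
  · rintro ⟨c, hc⟩ g
    apply Units.ext
    rw [Units.val_mul, Units.val_mul, hc]
    simp [Matrix.smul_mul, Matrix.mul_smul]



variable {F : Type*} [Field F] [Fintype F] [DecidableEq F]

variable (F) in
abbrev V := {x : GL (Fin 2) F // x ∉ Subgroup.center (GL (Fin 2) F)}

instance fintypeV : Fintype (V F) := Subtype.fintype _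

variable (F) in
abbrev R (x y : V F) : Prop := x.1.val * y.1.val = y.1.val * x.1.val

lemma nonscalar_of_V (x : V F) : ¬ IsScalar x.1.val := fun h => x.2 ((mem_center_iff _).2 h)

lemma R_trans {x y z : V F} (h1 : R F x y) (h2 : R F y z) : R F x z :=
  abelian (nonscalar_of_V y) h1 h2.symm

variable (F) in
instance S : Setoid (V F) := ⟨R F, ⟨fun _ => rfl, Eq.symm, R_trans⟩⟩

instance : DecidableRel ((· ≈ ·) : V F → V F → Prop) := fun x y =>
  inferInstanceAs (Decidable (x.1.val * y.1.val = y.1.val * x.1.val))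

def ev (M : Matrix (Fin 2) (Fin 2) F) : Finset F :=
  Finset.univ.filter fun t => det (M - t • 1) = 0

lemma mem_ev {M : Matrix (Fin 2) (Fin 2) F} {t : F} :
    t ∈ ev M ↔ det (M - t • 1) = 0 := by simp [ev]

lemma comb_eq_smul (M : Matrix (Fin 2) (Fin 2) F) {a b : F} (hb : b ≠ 0) :
    a • 1 + b • M = b • (M - (-(a/b)) • 1) := by
  rw [smul_sub, smul_smul, mul_neg, mul_div_cancel₀ _ hb, neg_smul, sub_neg_eq_add, add_comm]

lemma det_comb_ne_iff {M : Matrix (Fin 2) (Fin 2) F} {a b : F} (hb : b ≠ 0) :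
    det (a • 1 + b • M) ≠ 0 ↔ (-(a/b)) ∉ ev M := by
  rw [comb_eq_smul M hb, Matrix.det_smul, mem_ev]
  simp [pow_eq_zero_iff, hb]

lemma comm_comb (M : Matrix (Fin 2) (Fin 2) F) (a b : F) :
    M * (a • 1 + b • M) = (a • 1 + b • M) * M := by
  simp [mul_add, add_mul, mul_smul_comm, smul_mul_assoc]

/-- the member of the class of `x` given by coefficients -/
noncomputable def mker (x : V F) (p : F × F)
    (hp : p.2 ≠ 0 ∧ det (p.1 • 1 + p.2 • x.1.val) ≠ 0) : {y : V F // R F x y} := by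
  have hU : IsUnit (p.1 • 1 + p.2 • x.1.val) :=
    (Matrix.isUnit_iff_isUnit_det _).2 hp.2.isUnit
  refine ⟨⟨hU.unit, ?_⟩, ?_⟩
  · rw [mem_center_iff, hU.unit_spec]
    exact nonscalar_comb (nonscalar_of_V x) hp.1
  · show x.1.val * hU.unit.val = hU.unit.val * x.1.val
    rw [hU.unit_spec]
    exact comm_comb _ _ _

lemma mker_val (x : V F) (p : F × F) (hp) :
    ((mker x p hp).1.1.val : Matrix (Fin 2) (Fin 2) F) = p.1 • 1 + p.2 • x.1.val := by
  simp [mker]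

noncomputable def classEquiv (x : V F) :
    {p : F × F // p.2 ≠ 0 ∧ det (p.1 • 1 + p.2 • x.1.val) ≠ 0} ≃ {y : V F // R F x y} := by
  refine Equiv.ofBijective (fun z => mker x z.1 z.2) ⟨?_, ?_⟩
  · intro z w h
    have h2 : (z.1.1 • 1 + z.1.2 • x.1.val : Matrix (Fin 2) (Fin 2) F)
        = w.1.1 • 1 + w.1.2 • x.1.val :=
      (mker_val x z.1 z.2).symm.trans
        ((congrArg (fun u : {y : V F // R F x y} => u.1.1.val) h).trans (mker_val x w.1 w.2))
    obtain ⟨h3, h4⟩ := coeff_unique (nonscalar_of_V x) h2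
    exact Subtype.ext (Prod.ext h3 h4)
  · rintro ⟨y, hy⟩
    obtain ⟨a, b, hab⟩ := commutant (nonscalar_of_V x) hy.symm
    have hb : b ≠ 0 := by
      rintro rfl
      exact nonscalar_of_V y ⟨a, by simpa using hab⟩
    have hdet : det (a • 1 + b • x.1.val) ≠ 0 := by
      rw [← hab]
      exact ((Matrix.isUnit_iff_isUnit_det _).1 ⟨y.1, rfl⟩).ne_zero
    refine ⟨⟨(a, b), hb, hdet⟩, ?_⟩
    apply Subtype.ext; apply Subtype.ext; apply Units.ext
    rw [mker_val]
    exact hab.symm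

lemma classEquiv_val (x : V F) (z) :
    ((classEquiv x z).1.1.val : Matrix (Fin 2) (Fin 2) F) = z.1.1 • 1 + z.1.2 • x.1.val :=
  mker_val x z.1 z.2

noncomputable def paramEquiv (x : V F) :
    ({t : F // t ∉ ev x.1.val} × {b : F // b ≠ 0}) ≃
      {p : F × F // p.2 ≠ 0 ∧ det (p.1 • 1 + p.2 • x.1.val) ≠ 0} := by
  refine Equiv.ofBijective (fun z => ⟨(-(z.2.1 * z.1.1), z.2.1), z.2.2, ?_⟩) ⟨?_, ?_⟩
  · rw [det_comb_ne_iff z.2.2]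
    have : -(-(z.2.1 * z.1.1) / z.2.1) = z.1.1 := by
      rw [neg_div, neg_neg, mul_comm, mul_div_assoc, div_self z.2.2, mul_one]
    rw [this]
    exact z.1.2
  · rintro ⟨⟨t, ht⟩, ⟨b, hb⟩⟩ ⟨⟨t', ht'⟩, ⟨b', hb'⟩⟩ h
    simp only [Subtype.mk.injEq, Prod.mk.injEq] at h
    obtain ⟨h1, h2⟩ := h
    subst h2
    have : t = t' := by
      field_simp at h1
      exact neg_injective h1
    simp [this]
  · rintro ⟨⟨a, b⟩, hb, hdet⟩
    rw [det_comb_ne_iff hb] at hdet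
    refine ⟨⟨⟨-(a/b), hdet⟩, ⟨b, hb⟩⟩, Subtype.ext (Prod.ext ?_ rfl)⟩
    show -(b * -(a/b)) = a
    field_simp

lemma card_not_mem_finset (s : Finset F) :
    Fintype.card {t : F // t ∉ s} = Fintype.card F - s.card := by
  rw [Fintype.card_subtype_compl]
  congr 1
  simpa using Fintype.card_coe s

lemma card_ne_zero_sub : Fintype.card {b : F // b ≠ 0} = Fintype.card F - 1 := by
  rw [Fintype.card_subtype_compl, Fintype.card_subtype_eq]

lemma card_class (x : V F) :
    Fintype.card {y : V F // R F x y}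
      = (Fintype.card F - (ev x.1.val).card) * (Fintype.card F - 1) := by
  rw [← Fintype.card_congr ((paramEquiv x).trans (classEquiv x))]
  rw [Fintype.card_prod, card_not_mem_finset, card_ne_zero_sub]



lemma ev_comb (M : Matrix (Fin 2) (Fin 2) F) (a : F) {b : F} (hb : b ≠ 0) :
    ev (a • 1 + b • M) = (ev M).image (fun t => a + b * t) := by
  ext s
  rw [mem_ev, Finset.mem_image]
  have key : (a • 1 + b • M : Matrix (Fin 2) (Fin 2) F) - s • 1
      = b • (M - ((s - a)/b) • 1) := by
    ext i j
    simp only [Matrix.sub_apply, Matrix.add_apply, Matrix.smul_apply, Matrix.one_apply,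
      smul_eq_mul]
    by_cases hij : i = j <;> field_simp [hij] <;> ring
  rw [key, Matrix.det_smul]
  constructor
  · intro h
    refine ⟨(s - a)/b, ?_, by field_simp; ring⟩
    rw [mem_ev]
    simpa [pow_eq_zero_iff, hb] using h
  · rintro ⟨t, ht, rfl⟩
    rw [mem_ev] at ht
    have : (a + b * t - a) / b = t := by field_simp; ring
    rw [this, ht, mul_zero]

lemma exists_comb_of_R {x y : V F} (h : R F x y) :
    ∃ a b : F, b ≠ 0 ∧ y.1.val = a • 1 + b • x.1.val := by
  obtain ⟨a, b, hab⟩ := commutant (nonscalar_of_V x) h.symm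
  refine ⟨a, b, ?_, hab⟩
  rintro rfl
  exact nonscalar_of_V y ⟨a, by simpa using hab⟩

lemma card_ev_R {x y : V F} (h : R F x y) :
    (ev y.1.val).card = (ev x.1.val).card := by
  obtain ⟨a, b, hb, hab⟩ := exists_comb_of_R h
  rw [hab, ev_comb _ a hb]
  apply Finset.card_image_of_injective
  intro t t' htt
  exact mul_left_cancel₀ hb (add_left_cancel htt)

lemma card_ev_le_two (M : Matrix (Fin 2) (Fin 2) F) : (ev M).card ≤ 2 := by
  by_contra hcon
  push_neg at hcon
  obtain ⟨a, b, c, ha, hb, hc, hab, hac, hbc⟩ := Finset.two_lt_card_iff.1 hcon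
  rw [mem_ev, det_sub_smul] at ha hb hc
  have h1 : (a - b) * (a + b - Matrix.trace M) = 0 := by linear_combination ha - hb
  have h2 : (a - c) * (a + c - Matrix.trace M) = 0 := by linear_combination ha - hc
  rcases mul_eq_zero.1 h1 with h | h
  · exact hab (sub_eq_zero.1 h)
  rcases mul_eq_zero.1 h2 with h' | h'
  · exact hac (sub_eq_zero.1 h')
  exact hbc (by linear_combination h - h')

lemma vieta2 {M : Matrix (Fin 2) (Fin 2) F} {lam mu : F} (hne : lam ≠ mu)
    (hl : lam ∈ ev M) (hm : mu ∈ ev M) :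
    Matrix.trace M = lam + mu ∧ det M = lam * mu := by
  rw [mem_ev, det_sub_smul] at hl hm
  have h1 : (lam - mu) * (lam + mu - Matrix.trace M) = 0 := by linear_combination hl - hm
  rcases mul_eq_zero.1 h1 with h | h
  · exact absurd (sub_eq_zero.1 h) hne
  have hp : Matrix.trace M = lam + mu := (sub_eq_zero.1 h).symm
  exact ⟨hp, by linear_combination hl + lam * hp⟩

lemma vieta1 {M : Matrix (Fin 2) (Fin 2) F} {lam : F} (h : ev M = {lam}) :
    Matrix.trace M = 2 * lam ∧ det M = lam ^ 2 := by
  have hl : lam ∈ ev M := by rw [h]; exact Finset.mem_singleton_self lam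
  rw [mem_ev, det_sub_smul] at hl
  have h2 : Matrix.trace M - lam ∈ ev M := by
    rw [mem_ev, det_sub_smul]
    linear_combination hl
  rw [h, Finset.mem_singleton] at h2
  have hp : Matrix.trace M = 2 * lam := by linear_combination h2
  exact ⟨hp, by linear_combination hl + lam * hp⟩

lemma ev_of_td2 {N : Matrix (Fin 2) (Fin 2) F} {c₀ : F} (hc1 : c₀ ≠ 1)
    (ht : Matrix.trace N = 1 + c₀) (hd : det N = c₀) : ev N = {1, c₀} := by
  ext t
  rw [mem_ev, det_sub_smul, ht, hd]
  have : t * t - (1 + c₀) * t + c₀ = (t - 1) * (t - c₀) := by ring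
  rw [this, mul_eq_zero, sub_eq_zero, sub_eq_zero]
  simp

lemma ev_of_td1 {N : Matrix (Fin 2) (Fin 2) F}
    (ht : Matrix.trace N = 2) (hd : det N = 1) : ev N = {1} := by
  ext t
  rw [mem_ev, det_sub_smul, ht, hd]
  have : t * t - 2 * t + 1 = (t - 1) * (t - 1) := by ring
  rw [this, mul_eq_zero, sub_eq_zero]
  simp

lemma cnt_notype (x : V F) {s d : F} {k : ℕ}
    (hall : ∀ N : Matrix (Fin 2) (Fin 2) F, Matrix.trace N = s → det N = d → (ev N).card = k)
    (hk : (ev x.1.val).card ≠ k) :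
    Fintype.card {y : V F // R F x y ∧ Matrix.trace y.1.val = s ∧ det y.1.val = d} = 0 := by
  rw [Fintype.card_eq_zero_iff]
  constructor
  rintro ⟨y, hR, ht, hd⟩
  exact hk ((card_ev_R hR).symm.trans (hall y.1.val ht hd))

/-- the class of x, refined by trace and det conditions, as parameters -/
noncomputable def classEquivTD (x : V F) (s d : F) :
    {p : F × F // (p.2 ≠ 0 ∧ det (p.1 • 1 + p.2 • x.1.val) ≠ 0) ∧
      Matrix.trace (p.1 • 1 + p.2 • x.1.val) = s ∧ det (p.1 • 1 + p.2 • x.1.val) = d} ≃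
    {y : V F // R F x y ∧ Matrix.trace y.1.val = s ∧ det y.1.val = d} := by
  refine Equiv.trans (Equiv.trans (Equiv.subtypeSubtypeEquivSubtypeInter _ _).symm ?_)
    (Equiv.subtypeSubtypeEquivSubtypeInter (fun y : V F => R F x y)
      (fun y => Matrix.trace y.1.val = s ∧ det y.1.val = d))
  refine Equiv.subtypeEquiv (classEquiv x) (fun z => ?_)
  rw [classEquiv_val]

lemma cnt2 (x : V F) (hr : (ev x.1.val).card = 2) {c₀ : F} (hc0 : c₀ ≠ 0) (hc1 : c₀ ≠ 1) :
    Fintype.card {y : V F // R F x y ∧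
      Matrix.trace y.1.val = 1 + c₀ ∧ det y.1.val = c₀} = 2 := by
  obtain ⟨lam, mu, hne, hev⟩ := Finset.card_eq_two.1 hr
  have hl : lam ∈ ev x.1.val := by rw [hev]; simp
  have hm : mu ∈ ev x.1.val := by rw [hev]; simp
  obtain ⟨hp, hc⟩ := vieta2 hne hl hm
  have hlm : lam - mu ≠ 0 := sub_ne_zero.2 hne
  set q1 : F × F := (1 - (1 - c₀)/(lam - mu) * lam, (1 - c₀)/(lam - mu)) with hq1
  set q2 : F × F := (c₀ - (c₀ - 1)/(lam - mu) * lam, (c₀ - 1)/(lam - mu)) with hq2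
  have key : ∀ p : F × F,
      ((p.2 ≠ 0 ∧ det (p.1 • 1 + p.2 • x.1.val) ≠ 0) ∧
        Matrix.trace (p.1 • 1 + p.2 • x.1.val) = 1 + c₀ ∧
        det (p.1 • 1 + p.2 • x.1.val) = c₀)
      ↔ (p = q1 ∨ p = q2) := by
    rintro ⟨a, b⟩
    rw [trace_comb, det_comb, hp, hc]
    dsimp only
    simp only [hq1, hq2, Prod.mk.injEq]
    constructor
    · rintro ⟨-, htr, hdet⟩
      have hab1 : (a + b * lam) + (a + b * mu) = 1 + c₀ := by linear_combination htr
      have hab2 : (a + b * lam) * (a + b * mu) = c₀ := by linear_combination hdet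
      have h3 : ((a + b * lam) - 1) * ((a + b * lam) - c₀) = 0 := by
        linear_combination (a + b * lam) * hab1 - hab2
      rcases mul_eq_zero.1 h3 with h4 | h4
      · left
        have hα : a + b * lam = 1 := sub_eq_zero.1 h4
        have hβ : a + b * mu = c₀ := by linear_combination hab1 - hα
        have hb : b = (1 - c₀) / (lam - mu) := by
          rw [eq_div_iff hlm]; linear_combination hα - hβ
        exact ⟨by rw [← hb]; linear_combination hα, hb⟩
      · right
        have hα : a + b * lam = c₀ := sub_eq_zero.1 h4
        have hβ : a + b * mu = 1 := by linear_combination hab1 - hα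
        have hb : b = (c₀ - 1) / (lam - mu) := by
          rw [eq_div_iff hlm]; linear_combination hα - hβ
        exact ⟨by rw [← hb]; linear_combination hα, hb⟩
    · have hBlm1 : (1 - c₀)/(lam - mu) * (lam - mu) = 1 - c₀ := div_mul_cancel₀ _ hlm
      have hBlm2 : (c₀ - 1)/(lam - mu) * (lam - mu) = c₀ - 1 := div_mul_cancel₀ _ hlm
      rintro (⟨rfl, rfl⟩ | ⟨rfl, rfl⟩)
      · have hdet : (1 - (1 - c₀)/(lam - mu) * lam)^2
            + (1 - (1 - c₀)/(lam - mu) * lam) * ((1 - c₀)/(lam - mu)) * (lam + mu)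
            + ((1 - c₀)/(lam - mu))^2 * (lam * mu) = c₀ := by
          linear_combination -hBlm1
        refine ⟨⟨div_ne_zero (sub_ne_zero.2 (Ne.symm hc1)) hlm, by rw [hdet]; exact hc0⟩,
          by linear_combination -hBlm1, hdet⟩
      · have hdet : (c₀ - (c₀ - 1)/(lam - mu) * lam)^2
            + (c₀ - (c₀ - 1)/(lam - mu) * lam) * ((c₀ - 1)/(lam - mu)) * (lam + mu)
            + ((c₀ - 1)/(lam - mu))^2 * (lam * mu) = c₀ := by
          linear_combination -c₀ * hBlm2
        refine ⟨⟨div_ne_zero (sub_ne_zero.2 hc1) hlm, by rw [hdet]; exact hc0⟩,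
          by linear_combination -hBlm2, hdet⟩
  have hq12 : q1 ≠ q2 := by
    intro h
    have h1 := congrArg Prod.fst h
    have h2 := congrArg Prod.snd h
    simp only [hq1, hq2] at h1 h2
    exact hc1 (by linear_combination -h1 - lam * h2)
  rw [← Fintype.card_congr (classEquivTD x (1 + c₀) c₀),
    Fintype.card_congr (Equiv.subtypeEquivRight key), Fintype.card_subtype]
  have hfil : Finset.univ.filter (fun p : F × F => p = q1 ∨ p = q2) = {q1, q2} := by
    ext p; simp
  rw [hfil, Finset.card_insert_of_notMem (by simp [hq12]), Finset.card_singleton]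

lemma cnt1 (x : V F) (hr : (ev x.1.val).card = 1) :
    Fintype.card {y : V F // R F x y ∧
      Matrix.trace y.1.val = 2 ∧ det y.1.val = 1} = Fintype.card F - 1 := by
  obtain ⟨lam, hev⟩ := Finset.card_eq_one.1 hr
  obtain ⟨hp, hc⟩ := vieta1 hev
  have key : ∀ p : F × F,
      ((p.2 ≠ 0 ∧ det (p.1 • 1 + p.2 • x.1.val) ≠ 0) ∧
        Matrix.trace (p.1 • 1 + p.2 • x.1.val) = 2 ∧
        det (p.1 • 1 + p.2 • x.1.val) = 1)
      ↔ (p.2 ≠ 0 ∧ p.1 = 1 - p.2 * lam) := by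
    rintro ⟨a, b⟩
    rw [trace_comb, det_comb, hp, hc]
    dsimp only
    constructor
    · rintro ⟨⟨hb, -⟩, htr, hdet⟩
      have h4 : ((a + b * lam) - 1)^2 = 0 := by linear_combination hdet - htr
      have h5 : a + b * lam = 1 := by
        have := pow_eq_zero_iff (n := 2) (by norm_num) |>.1 h4
        linear_combination this
      exact ⟨hb, by linear_combination h5⟩
    · rintro ⟨hb, ha⟩
      have hdet : a^2 + a * b * (2 * lam) + b^2 * lam^2 = 1 := by
        rw [ha]; ring
      exact ⟨⟨hb, by rw [hdet]; exact one_ne_zero⟩, by rw [ha]; ring, hdet⟩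
  rw [← Fintype.card_congr (classEquivTD x 2 1),
    Fintype.card_congr (Equiv.subtypeEquivRight key), ← card_ne_zero_sub (F := F)]
  apply Fintype.card_congr
  refine Equiv.ofBijective (fun z => ⟨z.1.2, z.2.1⟩) ⟨?_, ?_⟩
  · rintro ⟨⟨a, b⟩, hb, ha⟩ ⟨⟨a', b'⟩, hb', ha'⟩ h
    simp only [Subtype.mk.injEq] at h ⊢
    dsimp only at ha ha' h
    subst h
    exact Prod.ext (ha.trans ha'.symm) rfl
  · rintro ⟨b, hb⟩
    exact ⟨⟨(1 - b * lam, b), hb, rfl⟩, Subtype.ext rfl⟩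



lemma card_yz (e : F) : Fintype.card {p : F × F // p.1 * p.2 = e}
    = if e = 0 then 2 * Fintype.card F - 1 else Fintype.card F - 1 := by
  split_ifs with he
  · subst he
    have hiff : ∀ p : F × F, p.1 * p.2 = 0 ↔ ¬(p.1 ≠ 0 ∧ p.2 ≠ 0) := by
      intro p; rw [mul_eq_zero]; push_neg; tauto
    rw [Fintype.card_congr (Equiv.subtypeEquivRight hiff), Fintype.card_subtype_compl]
    have h2 : Fintype.card {p : F × F // p.1 ≠ 0 ∧ p.2 ≠ 0}
        = (Fintype.card F - 1) * (Fintype.card F - 1) := by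
      calc Fintype.card {p : F × F // p.1 ≠ 0 ∧ p.2 ≠ 0}
          = Fintype.card ({a : F // a ≠ 0} × {b : F // b ≠ 0}) :=
            Fintype.card_congr (Equiv.subtypeProdEquivProd (p := fun a : F => a ≠ 0) (q := fun b : F => b ≠ 0))
        _ = (Fintype.card F - 1) * (Fintype.card F - 1) := by
            rw [Fintype.card_prod, card_ne_zero_sub]
    rw [h2, Fintype.card_prod]
    have h1 : 1 ≤ Fintype.card F := Fintype.card_pos
    obtain ⟨m, hm⟩ : ∃ m, Fintype.card F = m + 1 := ⟨Fintype.card F - 1, by omega⟩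
    rw [hm]
    have : (m + 1) * (m + 1) = m * m + 2 * m + 1 := by ring
    simp only [Nat.add_sub_cancel, this]
    omega
  · rw [← card_ne_zero_sub (F := F)]
    apply Fintype.card_congr
    refine Equiv.symm <| Equiv.ofBijective
      (fun z => ⟨(z.1, e / z.1), by rw [mul_comm]; exact div_mul_cancel₀ e z.2⟩) ⟨?_, ?_⟩
    · rintro ⟨y, hy⟩ ⟨y', hy'⟩ h
      exact Subtype.ext (by simpa using congrArg (fun w : {p : F × F // p.1 * p.2 = e} => w.1.1) h)
    · rintro ⟨⟨y, z⟩, hyz⟩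
      have hy : y ≠ 0 := by rintro rfl; dsimp only at hyz; rw [zero_mul] at hyz; exact he hyz.symm
      refine ⟨⟨y, hy⟩, Subtype.ext (Prod.ext rfl ?_)⟩
      dsimp only
      rw [div_eq_iff hy]
      linear_combination -hyz

def tdEquiv (s d : F) :
    {N : Matrix (Fin 2) (Fin 2) F // Matrix.trace N = s ∧ det N = d} ≃
      Σ x : F, {p : F × F // p.1 * p.2 = x * (s - x) - d} where
  toFun N := ⟨N.1 0 0, (N.1 0 1, N.1 1 0), by
    obtain ⟨ht, hd⟩ := N.2
    rw [Matrix.trace_fin_two] at ht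
    rw [Matrix.det_fin_two] at hd
    dsimp only
    linear_combination -hd + N.1 0 0 * ht⟩
  invFun z := ⟨!![z.1, z.2.1.1; z.2.1.2, s - z.1], by
    refine ⟨by rw [Matrix.trace_fin_two]; simp, ?_⟩
    rw [Matrix.det_fin_two_of]
    linear_combination -z.2.2⟩
  left_inv N := by
    apply Subtype.ext
    ext i j
    fin_cases i <;> fin_cases j <;> simp
    have := N.2.1
    rw [Matrix.trace_fin_two] at this
    linear_combination -this
  right_inv z := by
    rfl

lemma card_td2 {c₀ : F} (hc1 : c₀ ≠ 1) :
    Fintype.card {N : Matrix (Fin 2) (Fin 2) F // Matrix.trace N = 1 + c₀ ∧ det N = c₀}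
      = Fintype.card F ^ 2 + Fintype.card F := by
  rw [Fintype.card_congr (tdEquiv (1 + c₀) c₀), Fintype.card_sigma]
  have hcards : ∀ x : F, Fintype.card {p : F × F // p.1 * p.2 = x * (1 + c₀ - x) - c₀}
      = if x = 1 ∨ x = c₀ then 2 * Fintype.card F - 1 else Fintype.card F - 1 := by
    intro x
    rw [card_yz]
    have hiff : (x * (1 + c₀ - x) - c₀ = 0) ↔ (x = 1 ∨ x = c₀) := by
      have hfac : x * (1 + c₀ - x) - c₀ = -((x - 1) * (x - c₀)) := by ring
      rw [hfac, neg_eq_zero, mul_eq_zero, sub_eq_zero, sub_eq_zero]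
    rw [if_congr hiff rfl rfl]
  simp only [hcards]
  rw [Finset.sum_ite, Finset.sum_const, Finset.sum_const, smul_eq_mul, smul_eq_mul]
  have hfil : Finset.univ.filter (fun x : F => x = 1 ∨ x = c₀) = {1, c₀} := by
    ext t; simp
  have hcard1 : (Finset.univ.filter (fun x : F => x = 1 ∨ x = c₀)).card = 2 := by
    rw [hfil]; exact Finset.card_pair (Ne.symm hc1)
  have hcard2 : (Finset.univ.filter (fun x : F => ¬(x = 1 ∨ x = c₀))).card
      = Fintype.card F - 2 := by
    rw [Finset.filter_not, Finset.card_sdiff_of_subset (Finset.filter_subset _ _), hcard1]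
    simp
  rw [hcard1, hcard2]
  have h2 : 2 ≤ Fintype.card F := Fintype.one_lt_card
  obtain ⟨m, hm⟩ : ∃ m, Fintype.card F = m + 2 := ⟨Fintype.card F - 2, by omega⟩
  rw [hm]
  have e1 : 2 * (m + 2) - 1 = 2 * m + 3 := by omega
  have e2 : m + 2 - 2 = m := by omega
  have e3 : m + 2 - 1 = m + 1 := by omega
  rw [e1, e2, e3]
  ring

lemma card_td1 :
    Fintype.card {N : Matrix (Fin 2) (Fin 2) F // Matrix.trace N = 2 ∧ det N = 1}
      = Fintype.card F ^ 2 := by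
  rw [Fintype.card_congr (tdEquiv 2 1), Fintype.card_sigma]
  have hcards : ∀ x : F, Fintype.card {p : F × F // p.1 * p.2 = x * (2 - x) - 1}
      = if x = 1 then 2 * Fintype.card F - 1 else Fintype.card F - 1 := by
    intro x
    rw [card_yz]
    have hiff : (x * (2 - x) - 1 = 0) ↔ (x = 1) := by
      have hfac : x * (2 - x) - 1 = -((x - 1) * (x - 1)) := by ring
      rw [hfac, neg_eq_zero, mul_eq_zero, sub_eq_zero]
      tauto
    rw [if_congr hiff rfl rfl]
  simp only [hcards]
  rw [Finset.sum_ite, Finset.sum_const, Finset.sum_const, smul_eq_mul, smul_eq_mul]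
  have hcard1 : (Finset.univ.filter (fun x : F => x = 1)).card = 1 := by
    rw [Finset.filter_eq']
    simp
  have hcard2 : (Finset.univ.filter (fun x : F => ¬ x = 1)).card = Fintype.card F - 1 := by
    rw [Finset.filter_not, Finset.card_sdiff_of_subset (Finset.filter_subset _ _), hcard1]
    simp
  rw [hcard1, hcard2]
  have h2 : 2 ≤ Fintype.card F := Fintype.one_lt_card
  obtain ⟨m, hm⟩ : ∃ m, Fintype.card F = m + 2 := ⟨Fintype.card F - 2, by omega⟩
  rw [hm]
  have e1 : 2 * (m + 2) - 1 = 2 * m + 3 := by omega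
  have e3 : m + 2 - 1 = m + 1 := by omega
  rw [e1, e3]
  ring

lemma scalar_trace (c : F) : Matrix.trace (c • (1 : Matrix (Fin 2) (Fin 2) F)) = 2 * c := by
  rw [Matrix.trace_smul, Matrix.trace_one]
  simp [Fintype.card_fin]
  ring

lemma scalar_det (c : F) : det (c • (1 : Matrix (Fin 2) (Fin 2) F)) = c ^ 2 := by
  rw [Matrix.det_smul, Matrix.det_one]
  simp [Fintype.card_fin]

lemma cardV_td2 {c₀ : F} (hc0 : c₀ ≠ 0) (hc1 : c₀ ≠ 1) :
    Fintype.card {y : V F // Matrix.trace y.1.val = 1 + c₀ ∧ det y.1.val = c₀}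
      = Fintype.card F ^ 2 + Fintype.card F := by
  rw [← card_td2 hc1]
  apply Fintype.card_congr
  refine Equiv.ofBijective (fun y => ⟨y.1.1.val, y.2⟩) ⟨?_, ?_⟩
  · rintro ⟨⟨y, hy⟩, hP⟩ ⟨⟨y', hy'⟩, hP'⟩ h
    simp only [Subtype.mk.injEq] at h ⊢
    exact Units.ext h
  · rintro ⟨N, ht, hd⟩
    have hU : IsUnit N := (Matrix.isUnit_iff_isUnit_det N).2 (by rw [hd]; exact hc0.isUnit)
    have hns : ¬ IsScalar N := by
      rintro ⟨c, rfl⟩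
      rw [scalar_trace] at ht
      rw [scalar_det] at hd
      have hfac : (c - 1) * (c - c₀) = 0 := by linear_combination c * ht - hd
      rcases mul_eq_zero.1 hfac with h | h
      · rw [sub_eq_zero.1 h] at hd
        rw [one_pow] at hd
        exact hc1 hd.symm
      · have h2 : c₀ * (c₀ - 1) = 0 := by
          rw [sub_eq_zero.1 h] at hd
          linear_combination hd
        rcases mul_eq_zero.1 h2 with h3 | h3
        · exact hc0 h3
        · exact hc1 (sub_eq_zero.1 h3)
    refine ⟨⟨⟨hU.unit, ?_⟩, ?_⟩, ?_⟩
    · rw [mem_center_iff, hU.unit_spec]; exact hns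
    · constructor <;> rw [hU.unit_spec] <;> assumption
    · apply Subtype.ext
      exact hU.unit_spec

lemma cardV_td1 :
    Fintype.card {y : V F // Matrix.trace y.1.val = 2 ∧ det y.1.val = 1}
      = Fintype.card F ^ 2 - 1 := by
  have h1 : (Matrix.trace (1 : Matrix (Fin 2) (Fin 2) F) = 2 ∧
      det (1 : Matrix (Fin 2) (Fin 2) F) = 1) := by
    constructor
    · rw [Matrix.trace_one]; simp [Fintype.card_fin]
    · exact Matrix.det_one
  have e1 : {y : V F // Matrix.trace y.1.val = 2 ∧ det y.1.val = 1} ≃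
      {z : {N : Matrix (Fin 2) (Fin 2) F // Matrix.trace N = 2 ∧ det N = 1} //
        z ≠ ⟨1, h1⟩} := by
    refine Equiv.ofBijective (fun y => ⟨⟨y.1.1.val, y.2⟩, ?_⟩) ⟨?_, ?_⟩
    · intro hcon
      have : y.1.1.val = 1 := congrArg Subtype.val hcon
      exact y.1.2 ((mem_center_iff _).2 ⟨1, by rw [this]; simp⟩)
    · rintro ⟨⟨y, hy⟩, hP⟩ ⟨⟨y', hy'⟩, hP'⟩ h
      simp only [Subtype.mk.injEq] at h ⊢
      exact Units.ext h
    · rintro ⟨⟨N, ht, hd⟩, hne⟩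
      have hU : IsUnit N := (Matrix.isUnit_iff_isUnit_det N).2 (by rw [hd]; exact isUnit_one)
      have hns : ¬ IsScalar N := by
        rintro ⟨c, rfl⟩
        rw [scalar_trace] at ht
        rw [scalar_det] at hd
        have hc : c = 1 := by
          have hfac : (c - 1) ^ 2 = 0 := by linear_combination hd - ht
          have := pow_eq_zero_iff (n := 2) (by norm_num) |>.1 hfac
          linear_combination this
        apply hne
        apply Subtype.ext
        dsimp only
        rw [hc, one_smul]
      refine ⟨⟨⟨hU.unit, ?_⟩, ?_⟩, ?_⟩
      · rw [mem_center_iff, hU.unit_spec]; exact hns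
      · constructor <;> rw [hU.unit_spec] <;> assumption
      · apply Subtype.ext
        apply Subtype.ext
        exact hU.unit_spec
  rw [Fintype.card_congr e1]
  have : Fintype.card {z : {N : Matrix (Fin 2) (Fin 2) F // Matrix.trace N = 2 ∧ det N = 1} //
      z ≠ ⟨1, h1⟩} = Fintype.card {N : Matrix (Fin 2) (Fin 2) F //
        Matrix.trace N = 2 ∧ det N = 1} - 1 := by
    rw [Fintype.card_subtype_compl, Fintype.card_subtype_eq]
  rw [this, card_td1]

noncomputable def centerEquiv : Fˣ ≃ Subgroup.center (GL (Fin 2) F) := by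
  have hval : ∀ u : Fˣ, IsUnit (u.val • (1 : Matrix (Fin 2) (Fin 2) F)) := by
    intro u
    apply (Matrix.isUnit_iff_isUnit_det _).2
    rw [scalar_det]
    exact (u.isUnit.pow 2)
  refine Equiv.ofBijective (fun u => ⟨(hval u).unit, ?_⟩) ⟨?_, ?_⟩
  · rw [mem_center_iff, (hval u).unit_spec]
    exact ⟨u.val, rfl⟩
  · intro u u' h
    have h2 : (u.val • (1 : Matrix (Fin 2) (Fin 2) F)) = u'.val • 1 := by
      rw [← (hval u).unit_spec, ← (hval u').unit_spec]
      exact congrArg (fun z => z.1.val) h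
    have h3 := congrFun (congrFun h2 0) 0
    simp only [Matrix.smul_apply, Matrix.one_apply_eq, smul_eq_mul, mul_one] at h3
    exact Units.ext h3
  · rintro ⟨x, hx⟩
    obtain ⟨c, hc⟩ := (mem_center_iff x).1 hx
    have hc0 : c ≠ 0 := by
      rintro rfl
      have := x.val_inv
      rw [hc] at this
      simp only [zero_smul, Matrix.zero_mul] at this
      have := congrFun (congrFun this 0) 0
      simp [Matrix.one_apply] at this
    refine ⟨Units.mk0 c hc0, ?_⟩
    apply Subtype.ext
    apply Units.ext
    rw [(hval _).unit_spec]
    exact hc.symm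

lemma card_GL2 : Fintype.card (GL (Fin 2) F)
    = (Fintype.card F ^ 2 - 1) * (Fintype.card F ^ 2 - Fintype.card F) := by
  rw [← Nat.card_eq_fintype_card, Matrix.card_GL_field, Fin.prod_univ_two]
  norm_num

lemma card_V_eq : Fintype.card (V F)
    = (Fintype.card F ^ 2 - 1) * (Fintype.card F ^ 2 - Fintype.card F)
      - (Fintype.card F - 1) := by
  have h1 : Fintype.card (V F)
      = Fintype.card (GL (Fin 2) F)
        - Fintype.card {x : GL (Fin 2) F // x ∈ Subgroup.center (GL (Fin 2) F)} :=
    Fintype.card_subtype_compl _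
  have h2 : Fintype.card {x : GL (Fin 2) F // x ∈ Subgroup.center (GL (Fin 2) F)}
      = Fintype.card F - 1 := by
    rw [← Fintype.card_units (α := F)]
    exact (Fintype.card_congr centerEquiv).symm
  rw [h1, h2, card_GL2]



instance : DecidableEq (Quotient (S F)) :=
  fun a b => Quotient.recOnSubsingleton₂ a b fun x y =>
    decidable_of_iff (R F x y) ⟨fun h => Quotient.sound h, fun h => Quotient.exact h⟩

noncomputable def rbar : Quotient (S F) → ℕ :=
  Quotient.lift (fun x : V F => (ev x.1.val).card) (fun _ _ h => (card_ev_R h).symm)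

lemma rbar_le_two (c : Quotient (S F)) : rbar c ≤ 2 := by
  induction c using Quotient.ind with
  | _ x => exact card_ev_le_two _

lemma card_fiber (c : Quotient (S F)) :
    Fintype.card {y : V F // Quotient.mk (S F) y = c}
      = (Fintype.card F - rbar c) * (Fintype.card F - 1) := by
  induction c using Quotient.ind with
  | _ x =>
    have hr : rbar (Quotient.mk (S F) x) = (ev x.1.val).card := rfl
    rw [hr, ← card_class x]
    apply Fintype.card_congr
    exact Equiv.subtypeEquivRight fun y => by
      rw [Quotient.eq]
      exact ⟨fun h => h.symm, fun h => h.symm⟩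

lemma card_eq_sum_fibers (P : V F → Prop) [DecidablePred P] :
    Fintype.card {y : V F // P y}
      = ∑ c : Quotient (S F), Fintype.card {y : V F // Quotient.mk (S F) y = c ∧ P y} := by
  rw [← Fintype.card_sigma]
  apply Fintype.card_congr
  calc {y : V F // P y}
      ≃ Σ c : Quotient (S F), {z : {y : V F // P y} // Quotient.mk (S F) z.1 = c} :=
        (Equiv.sigmaFiberEquiv _).symm
    _ ≃ Σ c : Quotient (S F), {y : V F // Quotient.mk (S F) y = c ∧ P y} :=
        Equiv.sigmaCongrRight fun c =>
          (Equiv.subtypeSubtypeEquivSubtypeInter P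
            (fun y => Quotient.mk (S F) y = c)).trans
            (Equiv.subtypeEquivRight fun y => and_comm)

lemma card_fiber_td2 {c₀ : F} (hc0 : c₀ ≠ 0) (hc1 : c₀ ≠ 1) (c : Quotient (S F)) :
    Fintype.card {y : V F // Quotient.mk (S F) y = c ∧
        Matrix.trace y.1.val = 1 + c₀ ∧ det y.1.val = c₀}
      = if rbar c = 2 then 2 else 0 := by
  induction c using Quotient.ind with
  | _ x =>
    have he : ∀ y : V F, (Quotient.mk (S F) y = Quotient.mk (S F) x ∧
        Matrix.trace y.1.val = 1 + c₀ ∧ det y.1.val = c₀)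
        ↔ (R F x y ∧ Matrix.trace y.1.val = 1 + c₀ ∧ det y.1.val = c₀) := by
      intro y
      rw [Quotient.eq]
      exact and_congr_left fun _ => ⟨fun h => h.symm, fun h => h.symm⟩
    rw [Fintype.card_congr (Equiv.subtypeEquivRight he)]
    by_cases h2 : rbar (Quotient.mk (S F) x) = 2
    · rw [if_pos h2]
      exact cnt2 x h2 hc0 hc1
    · rw [if_neg h2]
      refine cnt_notype x (fun N ht hd => ?_) h2
      rw [ev_of_td2 hc1 ht hd]
      exact Finset.card_pair (Ne.symm hc1)

lemma card_fiber_td1 (c : Quotient (S F)) :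
    Fintype.card {y : V F // Quotient.mk (S F) y = c ∧
        Matrix.trace y.1.val = 2 ∧ det y.1.val = 1}
      = if rbar c = 1 then Fintype.card F - 1 else 0 := by
  induction c using Quotient.ind with
  | _ x =>
    have he : ∀ y : V F, (Quotient.mk (S F) y = Quotient.mk (S F) x ∧
        Matrix.trace y.1.val = 2 ∧ det y.1.val = 1)
        ↔ (R F x y ∧ Matrix.trace y.1.val = 2 ∧ det y.1.val = 1) := by
      intro y
      rw [Quotient.eq]
      exact and_congr_left fun _ => ⟨fun h => h.symm, fun h => h.symm⟩
    rw [Fintype.card_congr (Equiv.subtypeEquivRight he)]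
    by_cases h1 : rbar (Quotient.mk (S F) x) = 1
    · rw [if_pos h1]
      exact cnt1 x h1
    · rw [if_neg h1]
      refine cnt_notype x (fun N ht hd => ?_) h1
      rw [ev_of_td1 ht hd]
      exact Finset.card_singleton 1

variable (F) in
noncomputable def K2 : ℕ := (Finset.univ.filter (fun c : Quotient (S F) => rbar c = 2)).card
variable (F) in
noncomputable def K1 : ℕ := (Finset.univ.filter (fun c : Quotient (S F) => rbar c = 1)).card
variable (F) in
noncomputable def K0 : ℕ := (Finset.univ.filter (fun c : Quotient (S F) => rbar c = 0)).card

lemma K2_eq {c₀ : F} (hc0 : c₀ ≠ 0) (hc1 : c₀ ≠ 1) :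
    K2 F * 2 = Fintype.card F ^ 2 + Fintype.card F := by
  have h := card_eq_sum_fibers (fun y : V F =>
    Matrix.trace y.1.val = 1 + c₀ ∧ det y.1.val = c₀)
  have h2 : Fintype.card F ^ 2 + Fintype.card F
      = ∑ c : Quotient (S F), Fintype.card {y : V F // Quotient.mk (S F) y = c ∧
          Matrix.trace y.1.val = 1 + c₀ ∧ det y.1.val = c₀} :=
    (cardV_td2 hc0 hc1).symm.trans h
  simp only [card_fiber_td2 hc0 hc1] at h2
  rw [Finset.sum_ite, Finset.sum_const, Finset.sum_const_zero, add_zero, smul_eq_mul] at h2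
  rw [K2]
  exact h2.symm

lemma K1_eq : K1 F * (Fintype.card F - 1) = Fintype.card F ^ 2 - 1 := by
  have h := card_eq_sum_fibers (fun y : V F =>
    Matrix.trace y.1.val = 2 ∧ det y.1.val = 1)
  have h2 : Fintype.card F ^ 2 - 1
      = ∑ c : Quotient (S F), Fintype.card {y : V F // Quotient.mk (S F) y = c ∧
          Matrix.trace y.1.val = 2 ∧ det y.1.val = 1} :=
    cardV_td1.symm.trans h
  simp only [card_fiber_td1] at h2
  rw [Finset.sum_ite, Finset.sum_const, Finset.sum_const_zero, add_zero, smul_eq_mul] at h2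
  rw [K1]
  exact h2.symm

lemma total_split : Fintype.card (V F)
    = K2 F * ((Fintype.card F - 2) * (Fintype.card F - 1))
      + K1 F * ((Fintype.card F - 1) * (Fintype.card F - 1))
      + K0 F * (Fintype.card F * (Fintype.card F - 1)) := by
  have htot : Fintype.card (V F)
      = ∑ c : Quotient (S F), (Fintype.card F - rbar c) * (Fintype.card F - 1) := by
    calc Fintype.card (V F)
        = Fintype.card (Σ c : Quotient (S F), {y : V F // Quotient.mk (S F) y = c}) :=
          (Fintype.card_congr (Equiv.sigmaFiberEquiv _)).symm
      _ = ∑ c : Quotient (S F), Fintype.card {y : V F // Quotient.mk (S F) y = c} :=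
          Fintype.card_sigma
      _ = _ := Finset.sum_congr rfl (fun c _ => card_fiber c)
  rw [htot, ← Finset.sum_filter_add_sum_filter_not Finset.univ (fun c => rbar c = 2)]
  rw [← Finset.sum_filter_add_sum_filter_not
    (Finset.univ.filter (fun c : Quotient (S F) => ¬ rbar c = 2)) (fun c => rbar c = 1)]
  have hs1 : ∑ c ∈ Finset.univ.filter (fun c : Quotient (S F) => rbar c = 2),
      (Fintype.card F - rbar c) * (Fintype.card F - 1)
      = K2 F * ((Fintype.card F - 2) * (Fintype.card F - 1)) := by
    rw [Finset.sum_congr rfl (fun c hc => by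
      rw [(Finset.mem_filter.1 hc).2]), Finset.sum_const, smul_eq_mul]
    rfl
  have hf1 : (Finset.univ.filter (fun c : Quotient (S F) => ¬ rbar c = 2)).filter
      (fun c => rbar c = 1) = Finset.univ.filter (fun c : Quotient (S F) => rbar c = 1) := by
    rw [Finset.filter_filter]
    ext c
    simp only [Finset.mem_filter, Finset.mem_univ, true_and]
    constructor
    · rintro ⟨-, h⟩; exact h
    · intro h; exact ⟨by omega, h⟩
  have hs2 : ∑ c ∈ (Finset.univ.filter (fun c : Quotient (S F) => ¬ rbar c = 2)).filter
      (fun c => rbar c = 1), (Fintype.card F - rbar c) * (Fintype.card F - 1)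
      = K1 F * ((Fintype.card F - 1) * (Fintype.card F - 1)) := by
    rw [hf1]
    rw [Finset.sum_congr rfl (fun c hc => by
      rw [(Finset.mem_filter.1 hc).2]), Finset.sum_const, smul_eq_mul]
    rfl
  have hf2 : (Finset.univ.filter (fun c : Quotient (S F) => ¬ rbar c = 2)).filter
      (fun c => ¬ rbar c = 1) = Finset.univ.filter (fun c : Quotient (S F) => rbar c = 0) := by
    rw [Finset.filter_filter]
    ext c
    simp only [Finset.mem_filter, Finset.mem_univ, true_and]
    have := rbar_le_two c
    omega
  have hs3 : ∑ c ∈ (Finset.univ.filter (fun c : Quotient (S F) => ¬ rbar c = 2)).filter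
      (fun c => ¬ rbar c = 1), (Fintype.card F - rbar c) * (Fintype.card F - 1)
      = K0 F * (Fintype.card F * (Fintype.card F - 1)) := by
    rw [hf2]
    rw [Finset.sum_congr rfl (fun c hc => by
      rw [(Finset.mem_filter.1 hc).2, Nat.sub_zero]), Finset.sum_const, smul_eq_mul]
    rfl
  rw [hs1, hs2, hs3]
  ring

lemma exists_c0 (hq : 2 < Fintype.card F) : ∃ c₀ : F, c₀ ≠ 0 ∧ c₀ ≠ 1 := by
  by_contra h
  push_neg at h
  have hsub : (Finset.univ : Finset F) ⊆ {0, 1} := by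
    intro c _
    rcases ne_or_eq c 0 with h0 | h0
    · rw [Finset.mem_insert, Finset.mem_singleton]; right; exact h c h0
    · rw [Finset.mem_insert]; left; exact h0
  have hc := Finset.card_le_card hsub
  rw [Finset.card_univ] at hc
  have h2 : ({0, 1} : Finset F).card ≤ 2 := (Finset.card_insert_le _ _).trans (by simp)
  omega

lemma K2_val (hq : 2 < Fintype.card F) :
    K2 F = Fintype.card F * (Fintype.card F + 1) / 2 := by
  obtain ⟨c₀, hc0, hc1⟩ := exists_c0 hq
  have h := K2_eq hc0 hc1
  rw [pow_two] at h
  rw [show Fintype.card F * (Fintype.card F + 1)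
    = Fintype.card F * Fintype.card F + Fintype.card F from by ring]
  omega

lemma K1_val (hq : 2 < Fintype.card F) : K1 F = Fintype.card F + 1 := by
  have h := K1_eq (F := F)
  have hq3 : 3 ≤ Fintype.card F := hq
  have hle : Fintype.card F ≤ Fintype.card F * Fintype.card F := by nlinarith
  rw [pow_two] at h
  have h2 : Fintype.card F * Fintype.card F - 1
      = (Fintype.card F + 1) * (Fintype.card F - 1) := by
    zify [show 1 ≤ Fintype.card F from by omega,
      show 1 ≤ Fintype.card F * Fintype.card F from by nlinarith]
    ring
  rw [h2] at h
  have hpos : 0 < Fintype.card F - 1 := by omega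
  exact Nat.eq_of_mul_eq_mul_right hpos h

lemma K0_val (hq : 2 < Fintype.card F) :
    K0 F = Fintype.card F * (Fintype.card F - 1) / 2 := by
  obtain ⟨c₀, hc0, hc1⟩ := exists_c0 hq
  have hK2 := K2_eq hc0 hc1
  have hK1 := K1_val hq
  have hXY := (card_V_eq (F := F)).symm.trans (total_split (F := F))
  have hq3 : 3 ≤ Fintype.card F := hq
  set q := Fintype.card F with hqdef
  have hb1 : 1 ≤ q := by omega
  have hb2 : 2 ≤ q := by omega
  have hbq : q ≤ q^2 := by nlinarith
  have hbq2 : 1 ≤ q^2 := by nlinarith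
  have hbig : q - 1 ≤ (q^2 - 1) * (q^2 - q) := by
    have h1 : 1 ≤ q^2 - q := by
      have : q + 1 ≤ q^2 := by nlinarith
      omega
    calc q - 1 ≤ q^2 - 1 := by omega
    _ ≤ (q^2 - 1) * (q^2 - q) := Nat.le_mul_of_pos_right _ (by omega)
  zify [hb1, hb2, hbq, hbq2, hbig] at hXY
  zify at hK2 hK1
  have key : ((K0 F : ℤ) * 2 - ((q:ℤ)^2 - q)) * ((q:ℤ) * ((q:ℤ) - 1)) = 0 := by
    linear_combination (-2) * hXY - ((q:ℤ) - 2) * ((q:ℤ) - 1) * hK2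
      - 2 * ((q:ℤ) - 1)^2 * hK1
  have hqz : ((q:ℤ) * ((q:ℤ) - 1)) ≠ 0 := by
    have : (0:ℤ) < (q:ℤ) * ((q:ℤ) - 1) := by
      have : (3:ℤ) ≤ (q:ℤ) := by exact_mod_cast hq3
      nlinarith
    exact this.ne'
  have key2 : (K0 F : ℤ) * 2 = (q:ℤ)^2 - q := by
    rcases mul_eq_zero.1 key with h | h
    · linarith [sub_eq_zero.1 h]
    · exact absurd h hqz
  have hnat : K0 F * 2 = q * q - q := by
    zify [show q ≤ q * q from by nlinarith]
    rw [pow_two] at key2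
    linarith
  have hmul : q * (q - 1) = q * q - q := by
    zify [hb1, show q ≤ q * q from by nlinarith]
    ring
  rw [hmul]
  omega



lemma iso_of_classifier {V' W K : Type*} [Fintype V'] [Fintype W] [DecidableEq K]
    (G : SimpleGraph V') (H : SimpleGraph W) (f : V' → K) (g : W → K)
    (hG : ∀ x y, G.Adj x y ↔ x ≠ y ∧ f x = f y)
    (hH : ∀ x y, H.Adj x y ↔ x ≠ y ∧ g x = g y)
    (hcard : ∀ k, Fintype.card {x // f x = k} = Fintype.card {y // g y = k}) :
    Nonempty (G ≃g H) := by
  classical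
  have e : ∀ k, {x // f x = k} ≃ {y // g y = k} := fun k =>
    Fintype.equivOfCardEq (hcard k)
  let E : V' ≃ W :=
    ((Equiv.sigmaFiberEquiv f).symm.trans
      (Equiv.sigmaCongrRight e)).trans (Equiv.sigmaFiberEquiv g)
  have hg : ∀ x, g (E x) = f x := fun x => ((e (f x)) ⟨x, rfl⟩).2
  refine ⟨⟨E, ?_⟩⟩
  intro a b
  rw [hH _ _, hG a b, hg a, hg b]
  simp only [ne_eq, EmbeddingLike.apply_eq_iff_eq]

variable {F : Type*} [Field F] [Fintype F] [DecidableEq F]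

noncomputable def e2q (hq : 2 < Fintype.card F) :
    {c : Quotient (S F) // rbar c = 2} ≃
      Fin (Fintype.card F * (Fintype.card F + 1) / 2) :=
  Fintype.equivFinOfCardEq (by rw [Fintype.card_subtype]; exact K2_val hq)

noncomputable def e0q (hq : 2 < Fintype.card F) :
    {c : Quotient (S F) // rbar c = 0} ≃
      Fin (Fintype.card F * (Fintype.card F - 1) / 2) :=
  Fintype.equivFinOfCardEq (by rw [Fintype.card_subtype]; exact K0_val hq)

noncomputable def e1q (hq : 2 < Fintype.card F) :
    {c : Quotient (S F) // rbar c = 1} ≃ Fin (Fintype.card F + 1) :=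
  Fintype.equivFinOfCardEq (by rw [Fintype.card_subtype]; exact K1_val hq)

variable (F) in
abbrev Ktype : Type :=
  (Fin (Fintype.card F * (Fintype.card F + 1) / 2)
    ⊕ Fin (Fintype.card F * (Fintype.card F - 1) / 2))
    ⊕ Fin (Fintype.card F + 1)

noncomputable def lab (hq : 2 < Fintype.card F) : Quotient (S F) → Ktype F :=
  fun c =>
    if h2 : rbar c = 2 then Sum.inl (Sum.inl (e2q hq ⟨c, h2⟩))
    else if h0 : rbar c = 0 then Sum.inl (Sum.inr (e0q hq ⟨c, h0⟩))
    else Sum.inr (e1q hq ⟨c, by have := rbar_le_two c; omega⟩)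

lemma lab_eq_iff2 (hq : 2 < Fintype.card F) (c : Quotient (S F)) (i) :
    lab hq c = Sum.inl (Sum.inl i) ↔ c = ((e2q hq).symm i).1 := by
  constructor
  · intro h
    by_cases h2 : rbar c = 2
    · rw [lab, dif_pos h2] at h
      simp only [Sum.inl.injEq] at h
      have := congrArg (e2q hq).symm h
      rw [Equiv.symm_apply_apply] at this
      exact congrArg Subtype.val this.symm.symm ▸ congrArg Subtype.val this
    · by_cases h0 : rbar c = 0
      · rw [lab, dif_neg h2, dif_pos h0] at h
        simp at h
      · rw [lab, dif_neg h2, dif_neg h0] at h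
        simp at h
  · intro h
    have hr : rbar c = 2 := h ▸ ((e2q hq).symm i).2
    rw [lab, dif_pos hr]
    have : (⟨c, hr⟩ : {c : Quotient (S F) // rbar c = 2}) = (e2q hq).symm i :=
      Subtype.ext h
    rw [this, Equiv.apply_symm_apply]

lemma lab_eq_iff0 (hq : 2 < Fintype.card F) (c : Quotient (S F)) (i) :
    lab hq c = Sum.inl (Sum.inr i) ↔ c = ((e0q hq).symm i).1 := by
  constructor
  · intro h
    by_cases h2 : rbar c = 2
    · rw [lab, dif_pos h2] at h
      simp at h
    · by_cases h0 : rbar c = 0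
      · rw [lab, dif_neg h2, dif_pos h0] at h
        simp only [Sum.inl.injEq, Sum.inr.injEq] at h
        have := congrArg (e0q hq).symm h
        rw [Equiv.symm_apply_apply] at this
        exact congrArg Subtype.val this
      · rw [lab, dif_neg h2, dif_neg h0] at h
        simp at h
  · intro h
    have hr : rbar c = 0 := h ▸ ((e0q hq).symm i).2
    have hr2 : ¬ rbar c = 2 := by omega
    rw [lab, dif_neg hr2, dif_pos hr]
    have : (⟨c, hr⟩ : {c : Quotient (S F) // rbar c = 0}) = (e0q hq).symm i :=
      Subtype.ext h
    rw [this, Equiv.apply_symm_apply]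

lemma lab_eq_iff1 (hq : 2 < Fintype.card F) (c : Quotient (S F)) (i) :
    lab hq c = Sum.inr i ↔ c = ((e1q hq).symm i).1 := by
  constructor
  · intro h
    by_cases h2 : rbar c = 2
    · rw [lab, dif_pos h2] at h
      simp at h
    · by_cases h0 : rbar c = 0
      · rw [lab, dif_neg h2, dif_pos h0] at h
        simp at h
      · rw [lab, dif_neg h2, dif_neg h0] at h
        simp only [Sum.inr.injEq] at h
        have := congrArg (e1q hq).symm h
        rw [Equiv.symm_apply_apply] at this
        exact congrArg Subtype.val this
  · intro h
    have hr : rbar c = 1 := h ▸ ((e1q hq).symm i).2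
    have hr2 : ¬ rbar c = 2 := by omega
    have hr0 : ¬ rbar c = 0 := by omega
    rw [lab, dif_neg hr2, dif_neg hr0]
    congr 1
    have : (⟨c, hr⟩ : {c : Quotient (S F) // rbar c = 1}) = (e1q hq).symm i :=
      Subtype.ext h
    calc e1q hq ⟨c, _⟩ = e1q hq ((e1q hq).symm i) := by rw [← this]
    _ = i := Equiv.apply_symm_apply _ _

lemma lab_inj (hq : 2 < Fintype.card F) : Function.Injective (lab hq) := by
  intro c c' h
  rcases hk : lab hq c with (i|i)|i
  · rw [hk] at h
    exact ((lab_eq_iff2 hq c i).1 hk).trans ((lab_eq_iff2 hq c' i).1 h.symm).symm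
  · rw [hk] at h
    exact ((lab_eq_iff0 hq c i).1 hk).trans ((lab_eq_iff0 hq c' i).1 h.symm).symm
  · rw [hk] at h
    exact ((lab_eq_iff1 hq c i).1 hk).trans ((lab_eq_iff1 hq c' i).1 h.symm).symm



variable {F : Type*} [Field F] [Fintype F] [DecidableEq F]

section glabsec

variable {k1 m1 k2 m2 k3 m3 : ℕ}

def glab (w : ((Fin k1 × Fin m1) ⊕ (Fin k2 × Fin m2)) ⊕ (Fin k3 × Fin m3)) :
    (Fin k1 ⊕ Fin k2) ⊕ Fin k3 :=
  match w with
  | Sum.inl (Sum.inl p) => Sum.inl (Sum.inl p.1)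
  | Sum.inl (Sum.inr p) => Sum.inl (Sum.inr p.1)
  | Sum.inr p => Sum.inr p.1

lemma completeUnion_adj {k m : ℕ} (x y : Fin k × Fin m) :
    (completeUnion k m).Adj x y ↔ x ≠ y ∧ x.1 = y.1 := Iff.rfl

lemma glab_adj (u v : ((Fin k1 × Fin m1) ⊕ (Fin k2 × Fin m2)) ⊕ (Fin k3 × Fin m3)) :
    ((completeUnion k1 m1 ⊕g completeUnion k2 m2) ⊕g completeUnion k3 m3).Adj u v
      ↔ u ≠ v ∧ glab u = glab v := by
  rcases u with (u|u)|u <;> rcases v with (v|v)|v <;>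
    simp [SimpleGraph.sum_adj, completeUnion_adj, glab]

lemma card_glab_fiber_11 (i : Fin k1) :
    Fintype.card {w : ((Fin k1 × Fin m1) ⊕ (Fin k2 × Fin m2)) ⊕ (Fin k3 × Fin m3) //
      glab w = Sum.inl (Sum.inl i)} = m1 := by
  refine Eq.trans (Fintype.card_congr (Equiv.symm (Equiv.ofBijective (fun j : Fin m1 => ⟨Sum.inl (Sum.inl (i, j)), rfl⟩) ⟨?_, ?_⟩))) (Fintype.card_fin m1)
  · intro j j' h
    simpa [Prod.ext_iff] using congrArg Subtype.val h
  · rintro ⟨((⟨a, b⟩ | ⟨a, b⟩) | ⟨a, b⟩), hw⟩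
    · simp only [glab, Sum.inl.injEq] at hw
      exact ⟨b, by apply Subtype.ext; simp [hw]⟩
    · simp [glab] at hw
    · simp [glab] at hw

lemma card_glab_fiber_12 (i : Fin k2) :
    Fintype.card {w : ((Fin k1 × Fin m1) ⊕ (Fin k2 × Fin m2)) ⊕ (Fin k3 × Fin m3) //
      glab w = Sum.inl (Sum.inr i)} = m2 := by
  refine Eq.trans (Fintype.card_congr (Equiv.symm (Equiv.ofBijective (fun j : Fin m2 => ⟨Sum.inl (Sum.inr (i, j)), rfl⟩) ⟨?_, ?_⟩))) (Fintype.card_fin m2)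
  · intro j j' h
    simpa [Prod.ext_iff] using congrArg Subtype.val h
  · rintro ⟨((⟨a, b⟩ | ⟨a, b⟩) | ⟨a, b⟩), hw⟩
    · simp [glab] at hw
    · simp only [glab, Sum.inl.injEq, Sum.inr.injEq] at hw
      exact ⟨b, by apply Subtype.ext; simp [hw]⟩
    · simp [glab] at hw

lemma card_glab_fiber_2 (i : Fin k3) :
    Fintype.card {w : ((Fin k1 × Fin m1) ⊕ (Fin k2 × Fin m2)) ⊕ (Fin k3 × Fin m3) //
      glab w = Sum.inr i} = m3 := by
  refine Eq.trans (Fintype.card_congr (Equiv.symm (Equiv.ofBijective (fun j : Fin m3 => ⟨Sum.inr (i, j), rfl⟩) ⟨?_, ?_⟩))) (Fintype.card_fin m3)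
  · intro j j' h
    simpa [Prod.ext_iff] using congrArg Subtype.val h
  · rintro ⟨((⟨a, b⟩ | ⟨a, b⟩) | ⟨a, b⟩), hw⟩
    · simp [glab] at hw
    · simp [glab] at hw
    · simp only [glab, Sum.inr.injEq] at hw
      exact ⟨b, by apply Subtype.ext; simp [hw]⟩

end glabsec

lemma commGraph_adj_iff (x y : V F) :
    (commGraph (GL (Fin 2) F)).Adj x y ↔
      x ≠ y ∧ Quotient.mk (S F) x = Quotient.mk (S F) y := by
  constructor
  · rintro ⟨hne, hc⟩
    refine ⟨hne, Quotient.sound ?_⟩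
    show R F x y
    have := congrArg Units.val hc
    simpa [Units.val_mul] using this
  · rintro ⟨hne, hc⟩
    refine ⟨hne, ?_⟩
    have h2 : R F x y := Quotient.exact hc
    exact Units.ext (by simpa [Units.val_mul] using h2)

lemma main (hq : 2 < Fintype.card F) :
    Nonempty (commGraph (Matrix.GeneralLinearGroup (Fin 2) F) ≃g
      (completeUnion (Fintype.card F * (Fintype.card F + 1) / 2)
          (Fintype.card F ^ 2 - 3 * Fintype.card F + 2)
        ⊕g completeUnion (Fintype.card F * (Fintype.card F - 1) / 2)
          (Fintype.card F ^ 2 - Fintype.card F)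
        ⊕g completeUnion (Fintype.card F + 1)
          (Fintype.card F ^ 2 - 2 * Fintype.card F + 1))) := by
  classical
  have hq3 : 3 ≤ Fintype.card F := hq
  have ha1 : (Fintype.card F - 2) * (Fintype.card F - 1)
      = Fintype.card F ^ 2 - 3 * Fintype.card F + 2 := by
    zify [show 2 ≤ Fintype.card F from by omega, show 1 ≤ Fintype.card F from by omega,
      show 3 * Fintype.card F ≤ Fintype.card F ^ 2 from by nlinarith]
    ring
  have ha2 : Fintype.card F * (Fintype.card F - 1)
      = Fintype.card F ^ 2 - Fintype.card F := by
    zify [show 1 ≤ Fintype.card F from by omega,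
      show Fintype.card F ≤ Fintype.card F ^ 2 from by nlinarith]
    ring
  have ha3 : (Fintype.card F - 1) * (Fintype.card F - 1)
      = Fintype.card F ^ 2 - 2 * Fintype.card F + 1 := by
    zify [show 1 ≤ Fintype.card F from by omega,
      show 2 * Fintype.card F ≤ Fintype.card F ^ 2 from by nlinarith]
    ring
  refine iso_of_classifier _ _
    (fun x : V F => lab hq (Quotient.mk (S F) x)) glab ?_ ?_ ?_
  · intro x y
    rw [commGraph_adj_iff]
    refine and_congr_right fun _ => ⟨fun h => congrArg (lab hq) h, fun h => lab_inj hq h⟩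
  · exact glab_adj
  · rintro ((i|i)|i)
    · have hiff : ∀ x : V F,
          (lab hq (Quotient.mk (S F) x) = Sum.inl (Sum.inl i))
            ↔ Quotient.mk (S F) x = ((e2q hq).symm i).1 :=
        fun x => lab_eq_iff2 hq _ i
      rw [Fintype.card_congr (Equiv.subtypeEquivRight hiff), card_fiber,
        card_glab_fiber_11, ((e2q hq).symm i).2]
      exact ha1
    · have hiff : ∀ x : V F,
          (lab hq (Quotient.mk (S F) x) = Sum.inl (Sum.inr i))
            ↔ Quotient.mk (S F) x = ((e0q hq).symm i).1 :=
        fun x => lab_eq_iff0 hq _ i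
      rw [Fintype.card_congr (Equiv.subtypeEquivRight hiff), card_fiber,
        card_glab_fiber_12, ((e0q hq).symm i).2]
      rw [Nat.sub_zero]
      exact ha2
    · have hiff : ∀ x : V F,
          (lab hq (Quotient.mk (S F) x) = Sum.inr i)
            ↔ Quotient.mk (S F) x = ((e1q hq).symm i).1 :=
        fun x => lab_eq_iff1 hq _ i
      rw [Fintype.card_congr (Equiv.subtypeEquivRight hiff), card_fiber,
        card_glab_fiber_2, ((e1q hq).symm i).2]
      exact ha3

end CommGL

/-- For a prime power `q > 2`, the commuting graph of `GL(2, q)` is isomorphic to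
`(q(q+1)/2)·K_{q²-3q+2} ⊔ (q(q-1)/2)·K_{q²-q} ⊔ (q+1)·K_{q²-2q+1}`. -/
theorem commGraph_GL_two
    (F : Type*) [Field F] [Fintype F] [DecidableEq F] (hq : 2 < Fintype.card F) :
    Nonempty (commGraph (Matrix.GeneralLinearGroup (Fin 2) F) ≃g
      (completeUnion (Fintype.card F * (Fintype.card F + 1) / 2)
          (Fintype.card F ^ 2 - 3 * Fintype.card F + 2)
        ⊕g completeUnion (Fintype.card F * (Fintype.card F - 1) / 2)
          (Fintype.card F ^ 2 - Fintype.card F)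
        ⊕g completeUnion (Fintype.card F + 1)
          (Fintype.card F ^ 2 - 2 * Fintype.card F + 1))) :=
  CommGL.main hq
end

section
/- Let F = GF(2^n), n ≥ 2, and θ the Frobenius automorphism x ↦ x^2. Let A(n, θ) be the group of matrices U(a,b) = [[1,0,0],[a,1,0],[b,θ(a),1]] with a, b ∈ F, under matrix multiplication. Then Z(A(n,θ)) = {U(0,b) : b ∈ F}, the centralizer of any non-central U(a,b) equals Z(A(n,θ)) ∪ U(a,0)Z(A(n,θ)), and the commuting graph of A(n,θ) is isomorphic to (2^n - 1)·K_{2^n}. -/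
open Polynomial

/-- Hanaki's group `A(n, θ)`: pairs `(a, b)` over `F = GF(2ⁿ)` with multiplication
`U(a,b)·U(a',b') = U(a+a', b+b'+a'·θ(a))`, where `θ(x) = x²` is the Frobenius. -/
structure HanakiA (F : Type*) where
  a : F
  b : F

namespace HanakiA

variable {F : Type*} [Field F] [CharP F 2]

instance : Mul (HanakiA F) := ⟨fun x y => ⟨x.a + y.a, x.b + y.b + y.a * x.a ^ 2⟩⟩
instance : One (HanakiA F) := ⟨⟨0, 0⟩⟩
instance : Inv (HanakiA F) := ⟨fun x => ⟨x.a, x.b + x.a ^ 3⟩⟩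

lemma mul_def (x y : HanakiA F) :
    x * y = ⟨x.a + y.a, x.b + y.b + y.a * x.a ^ 2⟩ := rfl
lemma one_def : (1 : HanakiA F) = ⟨0, 0⟩ := rfl
lemma inv_def (x : HanakiA F) : x⁻¹ = ⟨x.a, x.b + x.a ^ 3⟩ := rfl

instance : Group (HanakiA F) where
  mul_assoc x y z := by
    simp only [mul_def, mk.injEq]
    refine ⟨by ring, ?_⟩
    rw [CharTwo.add_sq]
    ring
  one_mul x := by
    cases x
    simp [mul_def, one_def]
  mul_one x := by
    cases x
    simp [mul_def, one_def]
  inv_mul_cancel x := by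
    simp only [mul_def, inv_def, one_def, mk.injEq, CharTwo.add_self_eq_zero]
    refine ⟨trivial, ?_⟩
    have h2 : (2 : F) = 0 := CharTwo.two_eq_zero
    linear_combination (x.b + x.a ^ 3) * h2

instance [Finite F] : Finite (HanakiA F) :=
  Finite.of_equiv (F × F)
    ⟨fun p => ⟨p.1, p.2⟩, fun x => (x.a, x.b), fun _ => rfl, fun _ => rfl⟩

lemma commutes_iff (x y : HanakiA F) :
    x * y = y * x ↔ y.a * x.a ^ 2 = x.a * y.a ^ 2 := by
  simp only [mul_def, mk.injEq]
  constructor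
  · rintro ⟨-, h⟩; linear_combination h
  · intro h; exact ⟨add_comm _ _, by linear_combination h⟩

lemma commutes_iff_of_ne_zero (x y : HanakiA F) (hx : x.a ≠ 0) (hy : y.a ≠ 0) :
    x * y = y * x ↔ x.a = y.a := by
  rw [commutes_iff]
  constructor
  · intro h
    have h2 : x.a * y.a * (x.a - y.a) = 0 := by linear_combination h
    rcases mul_eq_zero.1 h2 with h3 | h3
    · rcases mul_eq_zero.1 h3 with h4 | h4
      · exact absurd h4 hx
      · exact absurd h4 hy
    · exact sub_eq_zero.1 h3
  · intro h; rw [h]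

lemma center_eq [Fintype F] (hcard : 4 ≤ Fintype.card F) :
    ((Subgroup.center (HanakiA F) : Set (HanakiA F)) = {z : HanakiA F | z.a = 0}) := by
  classical
  ext x
  simp only [SetLike.mem_coe, Subgroup.mem_center_iff, Set.mem_setOf_eq]
  constructor
  · intro h
    by_contra ha
    have hne : (({0, x.a} : Finset F)ᶜ).Nonempty := by
      rw [← Finset.card_pos, Finset.card_compl]
      have h2 : ({0, x.a} : Finset F).card ≤ 2 := Finset.card_insert_le _ _ |>.trans (by simp)
      omega
    obtain ⟨c, hc⟩ := hne
    simp only [Finset.mem_compl, Finset.mem_insert, Finset.mem_singleton, not_or] at hc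
    have hcomm := (h ⟨c, 0⟩).symm
    rw [commutes_iff] at hcomm
    simp only at hcomm
    have h2 : x.a * c * (x.a - c) = 0 := by linear_combination hcomm
    rcases mul_eq_zero.1 h2 with h3 | h3
    · rcases mul_eq_zero.1 h3 with h4 | h4
      · exact ha h4
      · exact hc.1 h4
    · exact hc.2 (sub_eq_zero.1 h3).symm
  · intro ha g
    rw [mul_def, mul_def, mk.injEq, ha]
    constructor
    · exact add_comm _ _
    · ring

end HanakiA

/-- For `F = GF(2ⁿ)`, `n ≥ 2`: the center of `A(n,θ)` is `{U(0,b) : b ∈ F}`, the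
centralizer of a non-central element `U(a,b)` is `Z ∪ U(a,0)·Z`, and the commuting
graph of `A(n,θ)` is isomorphic to `(2ⁿ-1)·K_{2ⁿ}`. -/
theorem commGraph_HanakiA
    (n : ℕ) (hn : 2 ≤ n) (F : Type*) [Field F] [Fintype F] [CharP F 2]
    (hF : Fintype.card F = 2 ^ n) :
    ((Subgroup.center (HanakiA F) : Set (HanakiA F)) = {z : HanakiA F | z.a = 0}) ∧
    (∀ z : HanakiA F, z ∉ Subgroup.center (HanakiA F) →
      (Subgroup.centralizer ({z} : Set (HanakiA F)) : Set (HanakiA F)) =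
        (Subgroup.center (HanakiA F) : Set (HanakiA F)) ∪
          (fun g => HanakiA.mk z.a 0 * g) '' (Subgroup.center (HanakiA F) : Set (HanakiA F))) ∧
    Nonempty (commGraph (HanakiA F) ≃g completeUnion (2 ^ n - 1) (2 ^ n)) := by
  classical
  have hcard4 : 4 ≤ Fintype.card F := by
    rw [hF]
    calc (4 : ℕ) = 2 ^ 2 := rfl
    _ ≤ 2 ^ n := Nat.pow_le_pow_right (by norm_num) hn
  have hcenter := HanakiA.center_eq (F := F) hcard4
  have key : ∀ x : HanakiA F, x ∈ Subgroup.center (HanakiA F) ↔ x.a = 0 := by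
    intro x
    rw [← SetLike.mem_coe, hcenter]
    rfl
  refine ⟨hcenter, ?_, ?_⟩
  · -- centralizer
    intro z hz
    have hza : z.a ≠ 0 := fun h => hz ((key z).2 h)
    ext x
    simp only [SetLike.mem_coe, Subgroup.mem_centralizer_iff, Set.mem_singleton_iff,
      Set.mem_union, Set.mem_image, hcenter, Set.mem_setOf_eq, forall_eq]
    rw [HanakiA.commutes_iff]
    constructor
    · intro h
      have h2 : z.a * x.a * (z.a - x.a) = 0 := by linear_combination h
      rcases mul_eq_zero.1 h2 with h3 | h3
      · rcases mul_eq_zero.1 h3 with h4 | h4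
        · exact absurd h4 hza
        · exact Or.inl h4
      · refine Or.inr ⟨⟨0, x.b⟩, rfl, ?_⟩
        rw [HanakiA.mul_def]
        simp only
        have : x.a = z.a := (sub_eq_zero.1 h3).symm
        cases x
        simp_all
    · rintro (h | ⟨g, hg, rfl⟩)
      · rw [h]; ring
      · rw [HanakiA.mul_def]
        simp only [hg]
        ring
  · -- graph isomorphism
    have keyne : ∀ x : HanakiA F, x ∉ Subgroup.center (HanakiA F) ↔ x.a ≠ 0 := fun x =>
      not_congr (key x)
    have cardne : Fintype.card {a : F // a ≠ 0} = 2 ^ n - 1 := by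
      rw [Fintype.card_subtype_compl, Fintype.card_subtype_eq (0 : F), hF]
    let e0 : {x : HanakiA F // x ∉ Subgroup.center (HanakiA F)} ≃ {x : HanakiA F // x.a ≠ 0} :=
      Equiv.subtypeEquivRight keyne
    let e3 : {x : HanakiA F // x.a ≠ 0} ≃ {a : F // a ≠ 0} × F :=
      { toFun := fun x => (⟨x.1.a, x.2⟩, x.1.b)
        invFun := fun p => ⟨⟨p.1.1, p.2⟩, p.1.2⟩
        left_inv := fun x => rfl
        right_inv := fun p => rfl }
    let e1 : {a : F // a ≠ 0} ≃ Fin (2 ^ n - 1) := Fintype.equivFinOfCardEq cardne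
    let e2 : F ≃ Fin (2 ^ n) := Fintype.equivFinOfCardEq hF
    let e := e0.trans (e3.trans (Equiv.prodCongr e1 e2))
    refine ⟨⟨e, ?_⟩⟩
    intro x y
    have hx : (x : HanakiA F).a ≠ 0 := (keyne _).1 x.2
    have hy : (y : HanakiA F).a ≠ 0 := (keyne _).1 y.2
    show ((e x ≠ e y) ∧ (e x).1 = (e y).1) ↔ (x ≠ y ∧ (x : HanakiA F) * y = y * x)
    have h1 : e x ≠ e y ↔ x ≠ y := not_congr e.apply_eq_iff_eq
    have h2 : (e x).1 = (e y).1 ↔ (x : HanakiA F).a = (y : HanakiA F).a := by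
      show e1 ⟨(x : HanakiA F).a, hx⟩ = e1 ⟨(y : HanakiA F).a, hy⟩ ↔ _
      rw [e1.apply_eq_iff_eq, Subtype.mk_eq_mk]
    rw [h1, h2, HanakiA.commutes_iff_of_ne_zero _ _ hx hy]
end
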